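/- arXiv:0908.3772 — 8 statements merged into one kernel-verified Lean document; each statement's English description precedes it below -/
import Mathlib

section
/- Let R be a commutative ring and θ an m-variate iterative derivation on R. For i = 1,…,m and k ∈ ℕ define θ_i^{(k)} := θ^{(k·e_i)}, where e_i ∈ ℕ^m is the i-th standard basis vector. Then each map θ_i : R → R[[T]], r ↦ Σ_{k∈ℕ} θ_i^{(k)}(r)·T^k, is a 1-variate iterative derivation on R, and these iterative derivations pairwise commute, i.e. θ_i^{(k)} ∘ θ_j^{(l)} = θ_j^{(l)} ∘ θ_i^{(k)} for all i,j ∈ {1,…,m} and all k,l ∈ ℕ. -/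
open scoped TensorProduct

/-- `binom(i+j, i)` for multi-indices: `∏ μ, (i μ + j μ).choose (i μ)`. -/
def multiChoose {m : ℕ} (i j : Fin m →₀ ℕ) : ℕ :=
  ∏ μ : Fin m, Nat.choose (i μ + j μ) (i μ)

/-- An `m`-variate iterative derivation on a commutative ring `R`: a ring homomorphism
`θ : R → R[[T_1,…,T_m]]`, written `θ(r) = Σ_k θ^{(k)}(r)·T^k`, with `θ^{(0)} = id` and
`θ^{(i)} ∘ θ^{(j)} = binom(i+j,i)·θ^{(i+j)}` for all multi-indices `i, j`. -/
structure IterativeDerivation (m : ℕ) (R : Type*) [CommRing R] where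
  toRingHom : R →+* MvPowerSeries (Fin m) R
  coeff_zero : ∀ r : R, MvPowerSeries.coeff 0 (toRingHom r) = r
  iterate : ∀ (i j : Fin m →₀ ℕ) (r : R),
    MvPowerSeries.coeff i (toRingHom (MvPowerSeries.coeff j (toRingHom r))) =
      multiChoose i j • MvPowerSeries.coeff (i + j) (toRingHom r)

namespace IterativeDerivation

/-- The coefficient maps `θ^{(k)} : R → R` of an iterative derivation. -/
noncomputable def D {m : ℕ} {R : Type*} [CommRing R] (θ : IterativeDerivation m R)
    (k : Fin m →₀ ℕ) (r : R) : R :=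
  MvPowerSeries.coeff k (θ.toRingHom r)

end IterativeDerivation

lemma fin1_eq_single (n : Fin 1 →₀ ℕ) : n = Finsupp.single 0 (n 0) :=
  Finsupp.ext fun μ => by rw [Subsingleton.elim μ 0, Finsupp.single_eq_same]

lemma antidiag_fin1 (n : Fin 1 →₀ ℕ) :
    Finset.HasAntidiagonal.antidiagonal n = (Finset.HasAntidiagonal.antidiagonal (n 0)).map
      (Function.Embedding.prodMap ⟨_, Finsupp.single_injective (0 : Fin 1)⟩
        ⟨_, Finsupp.single_injective 0⟩) := by
  conv_lhs => rw [fin1_eq_single n]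
  rw [Finsupp.antidiagonal_single]

lemma multiChoose_single {m : ℕ} (i : Fin m) (a b : ℕ) :
    multiChoose (Finsupp.single i a) (Finsupp.single i b) = Nat.choose (a + b) a := by
  unfold multiChoose
  rw [Finset.prod_eq_single i (fun μ _ hμ => by
    simp [Finsupp.single_apply, Ne.symm hμ]) (by simp)]
  simp

/-- The underlying function of the `i`-th univariate component. -/
noncomputable def cf {m : ℕ} {R : Type} [CommRing R] (θ : IterativeDerivation m R)
    (i : Fin m) (r : R) : MvPowerSeries (Fin 1) R :=
  fun n => MvPowerSeries.coeff (Finsupp.single i (n 0)) (θ.toRingHom r)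

lemma coeff_cf {m : ℕ} {R : Type} [CommRing R] (θ : IterativeDerivation m R)
    (i : Fin m) (r : R) (n : Fin 1 →₀ ℕ) :
    MvPowerSeries.coeff n (cf θ i r) =
      MvPowerSeries.coeff (Finsupp.single i (n 0)) (θ.toRingHom r) := rfl

noncomputable def component {m : ℕ} {R : Type} [CommRing R] (θ : IterativeDerivation m R)
    (i : Fin m) : IterativeDerivation 1 R where
  toRingHom :=
  { toFun := cf θ i
    map_one' := by
      apply MvPowerSeries.ext
      intro n
      rw [coeff_cf, map_one, MvPowerSeries.coeff_one, MvPowerSeries.coeff_one]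
      have h0 : Finsupp.single i (n 0) = 0 ↔ n = 0 := by
        constructor
        · intro h
          rw [fin1_eq_single n, Finsupp.single_eq_zero.mp h, Finsupp.single_zero]
        · intro h; simp [h]
      simp [h0]
    map_mul' := fun r s => by
      apply MvPowerSeries.ext
      intro n
      rw [coeff_cf, map_mul, MvPowerSeries.coeff_mul, MvPowerSeries.coeff_mul,
        Finsupp.antidiagonal_single, antidiag_fin1, Finset.sum_map, Finset.sum_map]
      simp [coeff_cf]
    map_zero' := by
      apply MvPowerSeries.ext
      intro n
      rw [coeff_cf]
      simp
    map_add' := fun r s => by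
      apply MvPowerSeries.ext
      intro n
      rw [map_add, coeff_cf, coeff_cf, coeff_cf, map_add, map_add] }
  coeff_zero := fun r => by
    rw [RingHom.coe_mk, MonoidHom.coe_mk, OneHom.coe_mk, coeff_cf]
    simpa using θ.coeff_zero r
  iterate := fun a b r => by
    rw [RingHom.coe_mk, MonoidHom.coe_mk, OneHom.coe_mk, coeff_cf, coeff_cf, coeff_cf,
      θ.iterate, ← Finsupp.single_add, multiChoose_single]
    congr 1
    all_goals simp [multiChoose]

/-- For an `m`-variate iterative derivation `θ` on a commutative ring `R`, each of the
families `θ_i^{(k)} := θ^{(k·e_i)}` (`i = 1,…,m`) is a `1`-variate iterative derivation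
`θ_i : R → R[[T]]`, and these iterative derivations pairwise commute:
`θ_i^{(k)} ∘ θ_j^{(l)} = θ_j^{(l)} ∘ θ_i^{(k)}` for all `i, j, k, l`. -/
theorem univariate_components_and_commute
    (m : ℕ) (R : Type) [CommRing R] (θ : IterativeDerivation m R) :
    (∀ i : Fin m, ∃ θi : IterativeDerivation 1 R,
      ∀ (k : ℕ) (r : R), θi.D (Finsupp.single 0 k) r = θ.D (Finsupp.single i k) r) ∧
    (∀ (i j : Fin m) (k l : ℕ) (r : R),
      θ.D (Finsupp.single i k) (θ.D (Finsupp.single j l) r) =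
        θ.D (Finsupp.single j l) (θ.D (Finsupp.single i k) r)) := by
  constructor
  · intro i
    refine ⟨component θ i, fun k r => ?_⟩
    unfold IterativeDerivation.D component
    rw [RingHom.coe_mk, MonoidHom.coe_mk, OneHom.coe_mk, coeff_cf]
    simp
  · intro i j k l r
    unfold IterativeDerivation.D
    rw [θ.iterate, θ.iterate, add_comm]
    congr 1
    unfold multiChoose
    refine Finset.prod_congr rfl fun μ _ => ?_
    conv_rhs => rw [add_comm]
    exact Nat.choose_symm_add
end

section
/- Let F be a field of characteristic p > 0 equipped with a non-degenerate m-variate iterative derivation θ, and let x_1,…,x_m ∈ F satisfy θ^{(e_i)}(x_j) = δ_{ij} for all i,j. Set F_1 := ∩_{i=1}^m ker(θ^{(e_i)}). Then the p^m monomials { x_1^{c_1}·x_2^{c_2}⋯x_m^{c_m} : 0 ≤ c_j ≤ p−1 } form a basis of F as a vector space over the subfield F_1; in particular [F : F_1] = p^m. -/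
open scoped TensorProduct

/-- `θ` is non-degenerate if the `m` derivations `θ^{(e_1)},…,θ^{(e_m)}` are
`F`-linearly independent as maps `F → F`. -/
def IterativeDerivation.Nondegenerate {m : ℕ} {F : Type*} [Field F]
    (θ : IterativeDerivation m F) : Prop :=
  LinearIndependent F (fun i : Fin m => (θ.D (Finsupp.single i 1) : F → F))


namespace MBA

open Finset

variable {m p : ℕ} {F : Type} [Field F]

noncomputable def DHom (θ : IterativeDerivation m F) (k : Fin m →₀ ℕ) : F →+ F :=
  ((MvPowerSeries.coeff k).toAddMonoidHom.comp θ.toRingHom.toAddMonoidHom)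

lemma DHom_apply (θ : IterativeDerivation m F) (k : Fin m →₀ ℕ) (a : F) :
    DHom θ k a = θ.D k a := rfl

lemma D_zero_eq (θ : IterativeDerivation m F) (a : F) : θ.D 0 a = a := θ.coeff_zero a

lemma D_mul (θ : IterativeDerivation m F) (k : Fin m →₀ ℕ) (a b : F) :
    θ.D k (a * b) = ∑ uv ∈ Finset.HasAntidiagonal.antidiagonal k, θ.D uv.1 a * θ.D uv.2 b := by
  unfold IterativeDerivation.D
  rw [map_mul, MvPowerSeries.coeff_mul]

lemma D_single_mul (θ : IterativeDerivation m F) (i : Fin m) (a b : F) :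
    θ.D (Finsupp.single i 1) (a * b)
      = a * θ.D (Finsupp.single i 1) b + θ.D (Finsupp.single i 1) a * b := by
  rw [D_mul, Finsupp.antidiagonal_single, Finset.sum_map]
  have h1 : Finset.HasAntidiagonal.antidiagonal (1 : ℕ) = {(0,1),(1,0)} := by decide
  rw [h1]
  simp [D_zero_eq]


lemma D_zero_arg (θ : IterativeDerivation m F) (k : Fin m →₀ ℕ) : θ.D k 0 = 0 :=
  (DHom θ k).map_zero

lemma D_add (θ : IterativeDerivation m F) (k : Fin m →₀ ℕ) (a b : F) :
    θ.D k (a + b) = θ.D k a + θ.D k b := (DHom θ k).map_add a b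

lemma multiChoose_single (i : Fin m) (n : Fin m →₀ ℕ) :
    multiChoose (Finsupp.single i 1) n = n i + 1 := by
  unfold multiChoose
  rw [Finset.prod_eq_single i]
  · simp [Nat.add_comm, Nat.choose_one_right]
  · intro μ _ hμ
    simp [Finsupp.single_apply, Ne.symm hμ]
  · simp

lemma D_single_D (θ : IterativeDerivation m F) (i : Fin m) (n : Fin m →₀ ℕ) (a : F) :
    θ.D (Finsupp.single i 1) (θ.D n a) = (n i + 1) • θ.D (n + Finsupp.single i 1) a := by
  have := θ.iterate (Finsupp.single i 1) n a
  rw [multiChoose_single] at this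
  rw [add_comm n (Finsupp.single i 1)]
  exact this

lemma sum_single_one (μ : Fin m) : (∑ ν, (Finsupp.single μ 1 : Fin m →₀ ℕ) ν) = 1 := by
  simp [Finsupp.single_apply]

lemma D_eq_zero_of_ker (hp : p.Prime) [CharP F p] (θ : IterativeDerivation m F) (b : F)
    (hb : ∀ i, θ.D (Finsupp.single i 1) b = 0) :
    ∀ N (k : Fin m →₀ ℕ), (∑ μ, k μ) ≤ N → (∀ μ, k μ < p) → k ≠ 0 → θ.D k b = 0 := by
  intro N
  induction N with
  | zero =>
    intro k h1 _ h3
    exact absurd (Finsupp.ext fun μ => by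
      have := Finset.sum_eq_zero_iff.mp (Nat.le_zero.mp h1) μ (Finset.mem_univ μ)
      simpa using this) h3
  | succ N IH =>
    intro k h1 h2 h3
    obtain ⟨μ, hμ⟩ : ∃ μ, k μ ≠ 0 := by
      by_contra h
      push_neg at h
      exact h3 (Finsupp.ext fun μ => h μ)
    set k' := k - Finsupp.single μ 1 with hk'def
    have hkk : k = k' + Finsupp.single μ 1 := by
      ext ν
      rw [hk'def]
      rcases eq_or_ne μ ν with h | h
      · subst h
        rw [Finsupp.add_apply, Finsupp.tsub_apply, Finsupp.single_eq_same]
        omega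
      · rw [Finsupp.add_apply, Finsupp.tsub_apply, Finsupp.single_eq_of_ne h.symm]
        omega
    have hit := D_single_D θ μ k' b
    have hk'μ : k' μ + 1 = k μ := by
      rw [hk'def]
      simp only [Finsupp.tsub_apply, Finsupp.single_eq_same]
      omega
    by_cases h0 : k' = 0
    · -- k = single μ 1
      have : θ.D k b = θ.D (Finsupp.single μ 1) b := by rw [hkk, h0, zero_add]
      rw [this, hb μ]
    · have hDk' : θ.D k' b = 0 := by
        apply IH k' _ _ h0
        · have hs : (∑ ν, k ν) = (∑ ν, k' ν) + 1 := by
            rw [hkk]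
            rw [← sum_single_one μ, ← Finset.sum_add_distrib]
            simp [Finsupp.add_apply]
          omega
        · intro ν
          have : k' ν ≤ k ν := by
            simp [hk'def, Finsupp.tsub_apply]
          exact lt_of_le_of_lt this (h2 ν)
      have : θ.D (Finsupp.single μ 1) (θ.D k' b) = 0 := by rw [hDk', D_zero_arg]
      rw [hit, hk'μ, ← hkk] at this
      have hcast : ((k μ : ℕ) : F) ≠ 0 := by
        rw [Ne, CharP.cast_eq_zero_iff F p]
        intro hdvd
        exact absurd (Nat.le_of_dvd (Nat.pos_of_ne_zero hμ) hdvd) (not_le.mpr (h2 μ))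
      rw [nsmul_eq_mul] at this
      exact (mul_eq_zero.mp this).resolve_left hcast
lemma D_nsmul (θ : IterativeDerivation m F) (k : Fin m →₀ ℕ) (n : ℕ) (a : F) :
    θ.D k (n • a) = n • θ.D k a := (DHom θ k).map_nsmul n a

lemma D_zsmul (θ : IterativeDerivation m F) (k : Fin m →₀ ℕ) (z : ℤ) (a : F) :
    θ.D k (z • a) = z • θ.D k a := (DHom θ k).map_zsmul z a

lemma d_one (θ : IterativeDerivation m F) (i : Fin m) :
    θ.D (Finsupp.single i 1) (1 : F) = 0 := by
  have h := D_single_mul θ i 1 1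
  rw [mul_one, one_mul, mul_one] at h
  exact left_eq_add.mp h

lemma d_intCast (θ : IterativeDerivation m F) (i : Fin m) (z : ℤ) :
    θ.D (Finsupp.single i 1) ((z : F)) = 0 := by
  have h : ((z : F)) = z • (1 : F) := by simp
  rw [h, D_zsmul, d_one, smul_zero]

lemma d_pow_of_zero (θ : IterativeDerivation m F) (i : Fin m) (a : F)
    (h : θ.D (Finsupp.single i 1) a = 0) (n : ℕ) :
    θ.D (Finsupp.single i 1) (a ^ n) = 0 := by
  induction n with
  | zero => simpa using d_one θ i
  | succ n IH =>
    rw [pow_succ, D_single_mul, IH, h]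
    ring

lemma d_pow_of_one (θ : IterativeDerivation m F) (i : Fin m) (a : F)
    (h : θ.D (Finsupp.single i 1) a = 1) (n : ℕ) :
    θ.D (Finsupp.single i 1) (a ^ n) = n • a ^ (n - 1) := by
  induction n with
  | zero => simpa using d_one θ i
  | succ n IH =>
    rw [pow_succ, D_single_mul, IH, h]
    cases n with
    | zero => simp
    | succ k =>
      simp only [nsmul_eq_mul, Nat.add_sub_cancel]
      push_cast
      ring

lemma d_prod_zero (θ : IterativeDerivation m F) (i : Fin m) (s : Finset (Fin m)) (f : Fin m → F)
    (h : ∀ j ∈ s, θ.D (Finsupp.single i 1) (f j) = 0) :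
    θ.D (Finsupp.single i 1) (∏ j ∈ s, f j) = 0 := by
  induction s using Finset.cons_induction with
  | empty => simpa using d_one θ i
  | cons a s ha IH =>
    rw [Finset.prod_cons, D_single_mul,
      IH (fun j hj => h j (Finset.mem_cons_of_mem hj)), h a (Finset.mem_cons_self a s)]
    ring

lemma d_X (θ : IterativeDerivation m F) (x : Fin m → F)
    (hx : ∀ i j : Fin m, θ.D (Finsupp.single i 1) (x j) = if i = j then 1 else 0)
    (i : Fin m) (c : Fin m → ℕ) :
    θ.D (Finsupp.single i 1) (∏ j, x j ^ c j)
      = (c i : F) * (x i ^ (c i - 1) * ∏ j ∈ Finset.univ.erase i, x j ^ c j) := by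
  rw [← Finset.mul_prod_erase Finset.univ _ (Finset.mem_univ i), D_single_mul]
  have h1 : θ.D (Finsupp.single i 1) (∏ j ∈ Finset.univ.erase i, x j ^ c j) = 0 :=
    d_prod_zero _ _ _ _ (fun j hj => d_pow_of_zero θ i (x j)
      (by rw [hx i j, if_neg (Ne.symm (Finset.ne_of_mem_erase hj))]) (c j))
  rw [h1, mul_zero, zero_add, d_pow_of_one θ i (x i) (by rw [hx i i, if_pos rfl])]
  rw [nsmul_eq_mul]
  ring
lemma D_sum (θ : IterativeDerivation m F) (k : Fin m →₀ ℕ) {ι : Type*} (s : Finset ι)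
    (f : ι → F) : θ.D k (∑ a ∈ s, f a) = ∑ a ∈ s, θ.D k (f a) :=
  map_sum (DHom θ k) f s

lemma d_natCast (θ : IterativeDerivation m F) (i : Fin m) (n : ℕ) :
    θ.D (Finsupp.single i 1) ((n : F)) = 0 := by
  have h : ((n : F)) = ((n : ℤ) : F) := by push_cast; ring
  rw [h, d_intCast]

lemma d_const_mul (θ : IterativeDerivation m F) (i : Fin m) (n : ℕ) (a : F) :
    θ.D (Finsupp.single i 1) ((n : F) * a) = (n : F) * θ.D (Finsupp.single i 1) a := by
  rw [D_single_mul, d_natCast]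
  ring

lemma sum_update_nat (hp' : 0 < p) (c' : Fin m → Fin p) (i : Fin m) (v : Fin p) :
    (∑ μ, ((Function.update c' i v) μ : ℕ))
      = (v : ℕ) + ∑ μ ∈ Finset.univ.erase i, (c' μ : ℕ) := by
  have h : ∀ μ, ((Function.update c' i v) μ : ℕ)
      = Function.update (fun ν => (c' ν : ℕ)) i (v : ℕ) μ :=
    fun μ => Function.apply_update (fun (_ : Fin m) (n : Fin p) => (n : ℕ)) c' i v μ
  rw [Finset.sum_congr rfl (fun μ _ => h μ),
    Finset.sum_update_of_mem (Finset.mem_univ i), ← Finset.erase_eq]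

lemma sum_erase_nat (c : Fin m → Fin p) (i : Fin m) :
    (∑ μ, (c μ : ℕ)) = (c i : ℕ) + ∑ μ ∈ Finset.univ.erase i, (c μ : ℕ) :=
  (Finset.add_sum_erase Finset.univ (fun μ => (c μ : ℕ)) (Finset.mem_univ i)).symm

lemma update_update_eq (c : Fin m → Fin p) (i : Fin m) (v w : Fin p) (h : w = c i) :
    Function.update (Function.update c i v) i w = c := by
  rw [Function.update_idem, h, Function.update_eq_self]

/-- collapse: if all coefficients with a nonzero exponent vanish and the sum is zero,
all coefficients vanish. -/
lemma collapse (hp : p.Prime) (x : Fin m → F) (b : (Fin m → Fin p) → F)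
    (hz : ∀ c : Fin m → Fin p, (∃ μ, (c μ : ℕ) ≠ 0) → b c = 0)
    (heq : (∑ c : Fin m → Fin p, b c * ∏ j, x j ^ (c j : ℕ)) = 0) :
    ∀ c, b c = 0 := by
  intro c
  by_cases hc : ∃ μ, (c μ : ℕ) ≠ 0
  · exact hz c hc
  · push_neg at hc
    have hsum : (∑ c : Fin m → Fin p, b c * ∏ j, x j ^ (c j : ℕ)) = b c := by
      rw [Finset.sum_eq_single c]
      · simp [hc]
      · intro d _ hdc
        have : ∃ μ, (d μ : ℕ) ≠ 0 := by
          by_contra h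
          push_neg at h
          exact hdc (by funext μ; exact Fin.ext ((h μ).trans (hc μ).symm))
        rw [hz d this, zero_mul]
      · intro h
        exact absurd (Finset.mem_univ c) h
    rw [heq] at hsum
    exact hsum.symm

lemma indep_aux (hp : p.Prime) [CharP F p] (θ : IterativeDerivation m F) (x : Fin m → F)
    (hx : ∀ i j : Fin m, θ.D (Finsupp.single i 1) (x j) = if i = j then 1 else 0) :
    ∀ (N : ℕ) (b : (Fin m → Fin p) → F),
      (∀ c i, θ.D (Finsupp.single i 1) (b c) = 0) →
      (∀ c, b c ≠ 0 → (∑ μ, (c μ : ℕ)) ≤ N) →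
      (∑ c : Fin m → Fin p, b c * ∏ j, x j ^ (c j : ℕ)) = 0 → ∀ c, b c = 0 := by
  intro N
  induction N with
  | zero =>
    intro b hker hsupp heq
    apply collapse hp x b _ heq
    intro c ⟨μ, hμ⟩
    by_contra hbc
    have := hsupp c hbc
    have h2 : (c μ : ℕ) ≤ ∑ ν, (c ν : ℕ) :=
      Finset.single_le_sum (f := fun ν => (c ν : ℕ)) (fun _ _ => Nat.zero_le _) (Finset.mem_univ μ)
    omega
  | succ N IH =>
    intro b hker hsupp heq
    have key : ∀ (i : Fin m) (c : Fin m → Fin p), (c i : ℕ) ≠ 0 → b c = 0 := by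
      intro i
      set b' : (Fin m → Fin p) → F := fun c' =>
        ((((c' i : ℕ) + 1 : ℕ)) : F) *
          b (Function.update c' i (⟨((c' i : ℕ) + 1) % p, Nat.mod_lt _ hp.pos⟩ : Fin p))
        with hb'def
      have hker' : ∀ c' j, θ.D (Finsupp.single j 1) (b' c') = 0 := by
        intro c' j
        rw [hb'def]
        simp only
        rw [d_const_mul, hker, mul_zero]
      have hb'top : ∀ c' : Fin m → Fin p, ¬ ((c' i : ℕ) + 1 < p) → b' c' = 0 := by
        intro c' hlt
        have hcp : (c' i : ℕ) + 1 = p := by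
          have := (c' i).isLt
          omega
        rw [hb'def]
        simp only
        rw [hcp, CharP.cast_eq_zero F p, zero_mul]
      have hsupp' : ∀ c', b' c' ≠ 0 → (∑ μ, (c' μ : ℕ)) ≤ N := by
        intro c' hne
        by_cases hlt : (c' i : ℕ) + 1 < p
        · have hb : b (Function.update c' i
              (⟨((c' i : ℕ) + 1) % p, Nat.mod_lt _ hp.pos⟩ : Fin p)) ≠ 0 := by
            intro h
            rw [hb'def] at hne
            simp only [h, mul_zero] at hne
            exact hne rfl
          have hN := hsupp _ hb
          rw [sum_update_nat hp.pos] at hN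
          have hval : ((⟨((c' i : ℕ) + 1) % p, Nat.mod_lt _ hp.pos⟩ : Fin p) : ℕ)
              = (c' i : ℕ) + 1 := Nat.mod_eq_of_lt hlt
          rw [hval] at hN
          rw [sum_erase_nat c' i]
          omega
        · exact absurd (hb'top c' hlt) hne
      have E1 : (∑ c : Fin m → Fin p, b c * (((c i : ℕ) : F) *
          (x i ^ ((c i : ℕ) - 1) * ∏ j ∈ Finset.univ.erase i, x j ^ (c j : ℕ)))) = 0 := by
        have E0 : θ.D (Finsupp.single i 1)
            (∑ c : Fin m → Fin p, b c * ∏ j, x j ^ (c j : ℕ)) = 0 := by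
          rw [heq, D_zero_arg]
        rw [D_sum] at E0
        rw [← E0]
        apply Finset.sum_congr rfl
        intro c _
        rw [D_single_mul, hker c i, zero_mul, add_zero, d_X θ x hx i (fun j => (c j : ℕ))]
      have heq' : (∑ c' : Fin m → Fin p, b' c' * ∏ j, x j ^ (c' j : ℕ)) = 0 := by
        have hA : (∑ c' : Fin m → Fin p, b' c' * ∏ j, x j ^ (c' j : ℕ))
            = ∑ c' ∈ Finset.univ.filter (fun c' : Fin m → Fin p => (c' i : ℕ) + 1 < p),
                b' c' * ∏ j, x j ^ (c' j : ℕ) := by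
          refine (Finset.sum_filter_of_ne ?_).symm
          intro c' _ hne
          by_contra hlt
          rw [hb'top c' hlt, zero_mul] at hne
          exact hne rfl
        have hB : (∑ c : Fin m → Fin p, b c * (((c i : ℕ) : F) *
              (x i ^ ((c i : ℕ) - 1) * ∏ j ∈ Finset.univ.erase i, x j ^ (c j : ℕ))))
            = ∑ c ∈ Finset.univ.filter (fun c : Fin m → Fin p => (c i : ℕ) ≠ 0),
                b c * (((c i : ℕ) : F) *
                (x i ^ ((c i : ℕ) - 1) * ∏ j ∈ Finset.univ.erase i, x j ^ (c j : ℕ))) := by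
          refine (Finset.sum_filter_of_ne ?_).symm
          intro c _ hne
          by_contra hzero
          rw [hzero] at hne
          simp at hne
        rw [hA, ← E1, hB]
        refine Finset.sum_bij' (fun c' _ => Function.update c' i
            (⟨((c' i : ℕ) + 1) % p, Nat.mod_lt _ hp.pos⟩ : Fin p))
          (fun c _ => Function.update c i
            (⟨(c i : ℕ) - 1, Nat.lt_of_le_of_lt (Nat.sub_le _ _) (c i).isLt⟩ : Fin p))
          ?_ ?_ ?_ ?_ ?_
        · -- maps into right filter
          intro c' hc'
          simp only [Finset.mem_filter, Finset.mem_univ, true_and] at hc' ⊢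
          rw [Function.update_self]
          show ((c' i : ℕ) + 1) % p ≠ 0
          rw [Nat.mod_eq_of_lt hc']
          omega
        · intro c hc
          simp only [Finset.mem_filter, Finset.mem_univ, true_and] at hc ⊢
          rw [Function.update_self]
          show (c i : ℕ) - 1 + 1 < p
          have := (c i).isLt
          omega
        · -- left inverse
          intro c' hc'
          simp only [Finset.mem_filter, Finset.mem_univ, true_and] at hc'
          apply update_update_eq
          apply Fin.ext
          show (Function.update c' i
            (⟨((c' i : ℕ) + 1) % p, Nat.mod_lt _ hp.pos⟩ : Fin p) i : ℕ) - 1 = (c' i : ℕ)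
          rw [Function.update_self]
          show ((c' i : ℕ) + 1) % p - 1 = (c' i : ℕ)
          rw [Nat.mod_eq_of_lt hc']
          omega
        · -- right inverse
          intro c hc
          simp only [Finset.mem_filter, Finset.mem_univ, true_and] at hc
          apply update_update_eq
          apply Fin.ext
          show ((Function.update c i (⟨(c i : ℕ) - 1,
              Nat.lt_of_le_of_lt (Nat.sub_le _ _) (c i).isLt⟩ : Fin p) i : ℕ) + 1) % p
            = (c i : ℕ)
          rw [Function.update_self]
          show ((c i : ℕ) - 1 + 1) % p = (c i : ℕ)
          have h1 : (c i : ℕ) - 1 + 1 = (c i : ℕ) := by omega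
          rw [h1, Nat.mod_eq_of_lt (c i).isLt]
        · -- term equality
          intro c' hc'
          simp only [Finset.mem_filter, Finset.mem_univ, true_and] at hc'
          rw [hb'def]
          simp only
          set t := Function.update c' i
            (⟨((c' i : ℕ) + 1) % p, Nat.mod_lt _ hp.pos⟩ : Fin p) with ht
          have hti : (t i : ℕ) = (c' i : ℕ) + 1 := by
            rw [ht, Function.update_self]
            exact Nat.mod_eq_of_lt hc'
          have htj : ∀ j ∈ Finset.univ.erase i, x j ^ (t j : ℕ) = x j ^ (c' j : ℕ) := by
            intro j hj
            rw [ht, Function.update_of_ne (Finset.ne_of_mem_erase hj)]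
          rw [Finset.prod_congr rfl htj, hti]
          rw [← Finset.mul_prod_erase Finset.univ (fun j => x j ^ (c' j : ℕ))
            (Finset.mem_univ i)]
          have h2 : (c' i : ℕ) + 1 - 1 = (c' i : ℕ) := by omega
          rw [h2]
          push_cast
          ring
      have hzero' := IH b' hker' hsupp' heq'
      intro c hci
      have hlt : (c i : ℕ) - 1 < p := Nat.lt_of_le_of_lt (Nat.sub_le _ _) (c i).isLt
      have hthis := hzero' (Function.update c i (⟨(c i : ℕ) - 1, hlt⟩ : Fin p))
      rw [hb'def] at hthis
      simp only [Function.update_self] at hthis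
      rw [Function.update_idem] at hthis
      have h1 : (⟨(((⟨(c i : ℕ) - 1, hlt⟩ : Fin p) : ℕ) + 1) % p,
          Nat.mod_lt _ hp.pos⟩ : Fin p) = c i := by
        apply Fin.ext
        show ((c i : ℕ) - 1 + 1) % p = (c i : ℕ)
        have h2 : (c i : ℕ) - 1 + 1 = (c i : ℕ) := by omega
        rw [h2, Nat.mod_eq_of_lt (c i).isLt]
      rw [h1, Function.update_eq_self] at hthis
      have h4 : ((((⟨(c i : ℕ) - 1, hlt⟩ : Fin p) : ℕ) + 1 : ℕ) : F) ≠ 0 := by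
        rw [Ne, CharP.cast_eq_zero_iff F p]
        intro hdvd
        have hle := Nat.le_of_dvd (by omega) hdvd
        have h5 : ((⟨(c i : ℕ) - 1, hlt⟩ : Fin p) : ℕ) = (c i : ℕ) - 1 := rfl
        rw [h5] at hle
        have := (c i).isLt
        omega
      exact (mul_eq_zero.mp hthis).resolve_left h4
    apply collapse hp x b _ heq
    intro c ⟨μ, hμ⟩
    exact key μ c hμ
noncomputable def Kc (c l : Fin m → Fin p) : Fin m →₀ ℕ :=
  Finsupp.equivFunOnFinite.symm (fun μ => (c μ : ℕ) + (l μ : ℕ))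

lemma Kc_apply (c l : Fin m → Fin p) (μ : Fin m) : Kc c l μ = (c μ : ℕ) + (l μ : ℕ) := rfl

noncomputable def Acoef (θ : IterativeDerivation m F) (x : Fin m → F) (c : Fin m → Fin p)
    (y : F) : F :=
  ∑ l : Fin m → Fin p,
    (∏ μ : Fin m, ((-1 : F) ^ (l μ : ℕ) * (((c μ : ℕ) + (l μ : ℕ)).choose (c μ : ℕ) : F))) *
      (θ.D (Kc c l) y * ∏ j, x j ^ (l j : ℕ))

lemma coef_eq (c l : Fin m → Fin p) :
    (∏ μ : Fin m, ((-1 : F) ^ (l μ : ℕ) * (((c μ : ℕ) + (l μ : ℕ)).choose (c μ : ℕ) : F)))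
      = ((((-1 : ℤ) ^ (∑ μ, (l μ : ℕ)) *
          (∏ μ, ((c μ : ℕ) + (l μ : ℕ)).choose (c μ : ℕ) : ℕ)) : ℤ) : F) := by
  push_cast
  rw [Finset.prod_mul_distrib, Finset.prod_pow_eq_pow_sum]

lemma Hlem (hp : p.Prime) [CharP F p] (n : ℕ) :
    (∑ ab ∈ Finset.univ.filter (fun ab : Fin p × Fin p => (ab.1 : ℕ) + (ab.2 : ℕ) = n),
      ((-1 : F) ^ (ab.2 : ℕ) * (((ab.1 : ℕ) + (ab.2 : ℕ)).choose (ab.1 : ℕ) : F)))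
      = if n = 0 then 1 else 0 := by
  rcases Nat.eq_zero_or_pos n with rfl | hn
  · rw [if_pos rfl]
    have hset : Finset.univ.filter (fun ab : Fin p × Fin p => (ab.1 : ℕ) + (ab.2 : ℕ) = 0)
        = {((⟨0, hp.pos⟩ : Fin p), (⟨0, hp.pos⟩ : Fin p))} := by
      ext ab
      simp only [Finset.mem_filter, Finset.mem_univ, true_and, Finset.mem_singleton]
      constructor
      · intro h
        have h1 : (ab.1 : ℕ) = 0 := by omega
        have h2 : (ab.2 : ℕ) = 0 := by omega
        exact Prod.ext (Fin.ext h1) (Fin.ext h2)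
      · intro h
        rw [h]
        rfl
    rw [hset, Finset.sum_singleton]
    norm_num
  · rw [if_neg (by omega)]
    by_cases hnp : n < p
    · -- full alternating sum
      have hbij : (∑ ab ∈ Finset.univ.filter
            (fun ab : Fin p × Fin p => (ab.1 : ℕ) + (ab.2 : ℕ) = n),
          ((-1 : F) ^ (ab.2 : ℕ) * (((ab.1 : ℕ) + (ab.2 : ℕ)).choose (ab.1 : ℕ) : F)))
          = ∑ k ∈ Finset.range (n + 1), ((-1 : F) ^ k * ((n.choose k : ℕ) : F)) := by
        refine Finset.sum_bij' (fun ab _ => (ab.2 : ℕ))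
          (fun k hk => ((⟨n - k, by have := Finset.mem_range.mp hk; omega⟩ : Fin p),
            (⟨k, by have := Finset.mem_range.mp hk; omega⟩ : Fin p))) ?_ ?_ ?_ ?_ ?_
        · intro ab hab
          simp only [Finset.mem_filter, Finset.mem_univ, true_and] at hab
          simp only [Finset.mem_range]
          omega
        · intro k hk
          simp only [Finset.mem_filter, Finset.mem_univ, true_and]
          show n - k + k = n
          have := Finset.mem_range.mp hk
          omega
        · intro ab hab
          simp only [Finset.mem_filter, Finset.mem_univ, true_and] at hab
          apply Prod.ext
          · apply Fin.ext
            show n - (ab.2 : ℕ) = (ab.1 : ℕ)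
            omega
          · apply Fin.ext
            rfl
        · intro k hk
          rfl
        · intro ab hab
          simp only [Finset.mem_filter, Finset.mem_univ, true_and] at hab
          show ((-1 : F) ^ (ab.2 : ℕ) * (((ab.1 : ℕ) + (ab.2 : ℕ)).choose (ab.1 : ℕ) : F))
            = (-1 : F) ^ (ab.2 : ℕ) * ((n.choose (ab.2 : ℕ) : ℕ) : F)
          rw [hab]
          congr 2
          have h2 : (ab.2 : ℕ) ≤ n := by omega
          rw [← Nat.choose_symm h2]
          congr 1
          omega
      rw [hbij]
      have hint := Int.alternating_sum_range_choose_of_ne (Nat.pos_iff_ne_zero.mp hn)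
      have hF : ((((∑ i ∈ Finset.range (n + 1), (-1 : ℤ) ^ i * (n.choose i : ℤ)) : ℤ)) : F)
          = 0 := by rw [hint]; norm_num
      rw [← hF]
      push_cast
      rfl
    · -- n ≥ p : every binomial coefficient is divisible by p
      apply Finset.sum_eq_zero
      intro ab hab
      simp only [Finset.mem_filter, Finset.mem_univ, true_and] at hab
      have hdvd : p ∣ ((ab.1 : ℕ) + (ab.2 : ℕ)).choose (ab.1 : ℕ) :=
        Nat.Prime.dvd_choose_add hp ab.1.isLt ab.2.isLt (by omega)
      have : ((((ab.1 : ℕ) + (ab.2 : ℕ)).choose (ab.1 : ℕ) : ℕ) : F) = 0 :=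
        (CharP.cast_eq_zero_iff F p _).mpr hdvd
      rw [this, mul_zero]

/-- the generic double-sum term -/
noncomputable def term2 (θ : IterativeDerivation m F) (x : Fin m → F) (y : F)
    (c l : Fin m → Fin p) : F :=
  (∏ μ : Fin m, ((-1 : F) ^ (l μ : ℕ) * (((c μ : ℕ) + (l μ : ℕ)).choose (c μ : ℕ) : F))) *
    (θ.D (Kc c l) y * ∏ j, x j ^ ((c j : ℕ) + (l j : ℕ)))

def tmap (q : Fin m → Fin p × Fin p) : Fin m → Fin (2 * p + 1) := fun μ =>
  ⟨((q μ).1 : ℕ) + ((q μ).2 : ℕ), by have := (q μ).1.isLt; have := (q μ).2.isLt; omega⟩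

lemma span_identity (hp : p.Prime) [CharP F p] (θ : IterativeDerivation m F)
    (x : Fin m → F) (y : F) :
    (∑ c : Fin m → Fin p, Acoef θ x c y * ∏ j, x j ^ (c j : ℕ)) = y := by
  have step1 : (∑ c : Fin m → Fin p, Acoef θ x c y * ∏ j, x j ^ (c j : ℕ))
      = ∑ c : Fin m → Fin p, ∑ l : Fin m → Fin p, term2 θ x y c l := by
    apply Finset.sum_congr rfl
    intro c _
    unfold Acoef term2
    rw [Finset.sum_mul]
    apply Finset.sum_congr rfl
    intro l _
    have hX : (∏ j, x j ^ (l j : ℕ)) * (∏ j, x j ^ (c j : ℕ))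
        = ∏ j, x j ^ ((c j : ℕ) + (l j : ℕ)) := by
      rw [← Finset.prod_mul_distrib]
      exact Finset.prod_congr rfl (fun j _ => by rw [← pow_add, add_comm])
    rw [← hX]
    ring
  have step2 : (∑ c : Fin m → Fin p, ∑ l : Fin m → Fin p, term2 θ x y c l)
      = ∑ q : Fin m → Fin p × Fin p,
          term2 θ x y (fun μ => (q μ).1) (fun μ => (q μ).2) := by
    rw [← Fintype.sum_prod_type']
    exact (Fintype.sum_equiv (Equiv.arrowProdEquivProdArrow (Fin m) (fun _ => Fin p) (fun _ => Fin p))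
      _ _ (fun q => rfl)).symm
  have step3 : (∑ q : Fin m → Fin p × Fin p,
        term2 θ x y (fun μ => (q μ).1) (fun μ => (q μ).2))
      = ∑ t : Fin m → Fin (2 * p + 1), ∑ q ∈ Finset.univ.filter
          (fun q : Fin m → Fin p × Fin p => tmap q = t),
          term2 θ x y (fun μ => (q μ).1) (fun μ => (q μ).2) :=
    (Finset.sum_fiberwise Finset.univ tmap _).symm
  have step4 : ∀ t : Fin m → Fin (2 * p + 1),
      (∑ q ∈ Finset.univ.filter (fun q : Fin m → Fin p × Fin p => tmap q = t),
        term2 θ x y (fun μ => (q μ).1) (fun μ => (q μ).2))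
      = (∏ μ : Fin m, if (t μ : ℕ) = 0 then (1 : F) else 0) *
        (θ.D (Finsupp.equivFunOnFinite.symm (fun μ => (t μ : ℕ))) y *
          ∏ j, x j ^ (t j : ℕ)) := by
    intro t
    have hmem : ∀ q : Fin m → Fin p × Fin p,
        tmap q = t ↔ ∀ μ, ((q μ).1 : ℕ) + ((q μ).2 : ℕ) = (t μ : ℕ) := by
      intro q
      rw [funext_iff]
      constructor
      · intro h μ
        exact congrArg Fin.val (h μ)
      · intro h μ
        exact Fin.ext (h μ)
    have hcongr : ∀ q ∈ Finset.univ.filter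
        (fun q : Fin m → Fin p × Fin p => tmap q = t),
        term2 θ x y (fun μ => (q μ).1) (fun μ => (q μ).2)
        = (∏ μ : Fin m, ((-1 : F) ^ ((q μ).2 : ℕ) *
          ((((q μ).1 : ℕ) + ((q μ).2 : ℕ)).choose ((q μ).1 : ℕ) : F))) *
        (θ.D (Finsupp.equivFunOnFinite.symm (fun μ => (t μ : ℕ))) y *
          ∏ j, x j ^ (t j : ℕ)) := by
      intro q hq
      rw [Finset.mem_filter] at hq
      have hq2 := (hmem q).mp hq.2
      unfold term2 Kc
      have hfun : (fun μ => (((fun ν => (q ν).1) μ : ℕ)) + (((fun ν => (q ν).2) μ : ℕ)))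
          = fun μ => (t μ : ℕ) := funext hq2
      rw [hfun]
      congr 1
      congr 1
      exact Finset.prod_congr rfl (fun j _ => by rw [hq2 j])
    rw [Finset.sum_congr rfl hcongr, ← Finset.sum_mul]
    congr 1
    have hfib : Finset.univ.filter (fun q : Fin m → Fin p × Fin p => tmap q = t)
        = Fintype.piFinset (fun μ => Finset.univ.filter
            (fun ab : Fin p × Fin p => (ab.1 : ℕ) + (ab.2 : ℕ) = (t μ : ℕ))) := by
      ext q
      simp only [Finset.mem_filter, Finset.mem_univ, true_and, Fintype.mem_piFinset]
      exact hmem q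
    rw [hfib]
    refine Eq.trans ((Finset.prod_univ_sum (fun μ => Finset.univ.filter
        (fun ab : Fin p × Fin p => (ab.1 : ℕ) + (ab.2 : ℕ) = (t μ : ℕ)))
        (fun μ ab => (-1 : F) ^ (ab.2 : ℕ) *
          (((ab.1 : ℕ) + (ab.2 : ℕ)).choose (ab.1 : ℕ) : F))).symm) ?_
    exact Finset.prod_congr rfl (fun μ _ => Hlem hp (t μ : ℕ))
  rw [step1, step2, step3, Finset.sum_congr rfl (fun t _ => step4 t)]
  rw [Finset.sum_eq_single (fun _ => (⟨0, by omega⟩ : Fin (2 * p + 1)))]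
  · have hall : ∀ μ : Fin m, (((fun _ => (⟨0, by omega⟩ : Fin (2 * p + 1))) :
        Fin m → Fin (2 * p + 1)) μ : ℕ) = 0 := fun _ => rfl
    rw [Finset.prod_congr rfl (fun μ _ => by rw [if_pos (hall μ)])]
    rw [Finset.prod_const_one, one_mul]
    have h0 : (Finsupp.equivFunOnFinite.symm (fun _ : Fin m => (0 : ℕ))) = (0 : Fin m →₀ ℕ) := by
      apply Finsupp.ext
      intro μ
      rfl
    rw [h0, D_zero_eq]
    simp
  · intro t _ ht
    have : ∃ μ, (t μ : ℕ) ≠ 0 := by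
      by_contra h
      push_neg at h
      exact ht (funext fun μ => Fin.ext (h μ))
    obtain ⟨μ, hμ⟩ := this
    rw [Finset.prod_eq_zero (Finset.mem_univ μ) (by rw [if_neg hμ]), zero_mul]
  · intro h
    exact absurd (Finset.mem_univ _) h
lemma d_intCast_mul (θ : IterativeDerivation m F) (i : Fin m) (z : ℤ) (a : F) :
    θ.D (Finsupp.single i 1) ((z : F) * a) = (z : F) * θ.D (Finsupp.single i 1) a := by
  rw [D_single_mul, d_intCast]
  ring

lemma choose_shift (a b : ℕ) :
    (a + b + 1).choose a * (b + 1) = (a + b).choose a * (a + b + 1) := by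
  have h0 := Nat.add_one_mul_choose_eq (a + b) b
  have h1 : (a + b).choose b = (a + b).choose a := by
    have h := Nat.choose_symm (Nat.le_add_left b a)
    rw [← h]
    congr 1
    omega
  have h2 : (a + b + 1).choose (b + 1) = (a + b + 1).choose a := by
    have h := Nat.choose_symm (show b + 1 ≤ a + b + 1 by omega)
    rw [← h]
    congr 1
    omega
  rw [h2, h1] at h0
  rw [← h0, mul_comm]

lemma Kc_update (c l : Fin m → Fin p) (i : Fin m) (v : Fin p) (hv : (v : ℕ) = (l i : ℕ) + 1) :
    Kc c (Function.update l i v) = Kc c l + Finsupp.single i 1 := by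
  apply Finsupp.ext
  intro μ
  rw [Finsupp.add_apply, Kc_apply, Kc_apply, Finsupp.single_apply]
  rcases eq_or_ne i μ with rfl | hμ
  · rw [Function.update_self, hv, if_pos rfl]
    omega
  · rw [Function.update_of_ne (Ne.symm hμ), if_neg hμ]
    omega

lemma d_Acoef (hp : p.Prime) [CharP F p] (θ : IterativeDerivation m F) (x : Fin m → F)
    (hx : ∀ i j : Fin m, θ.D (Finsupp.single i 1) (x j) = if i = j then 1 else 0)
    (c : Fin m → Fin p) (y : F) (i : Fin m) :
    θ.D (Finsupp.single i 1) (Acoef θ x c y) = 0 := by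
  set U : (Fin m → Fin p) → F := fun l =>
    ((((-1 : ℤ) ^ (∑ μ, (l μ : ℕ)) *
        (∏ μ, ((c μ : ℕ) + (l μ : ℕ)).choose (c μ : ℕ) : ℕ) *
        (((c i : ℕ) + (l i : ℕ) + 1 : ℕ))) : ℤ) : F) *
      (θ.D (Kc c l + Finsupp.single i 1) y * ∏ j, x j ^ (l j : ℕ)) with hU
  set V : (Fin m → Fin p) → F := fun l =>
    ((((-1 : ℤ) ^ (∑ μ, (l μ : ℕ)) *
        (∏ μ, ((c μ : ℕ) + (l μ : ℕ)).choose (c μ : ℕ) : ℕ) *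
        ((l i : ℕ))) : ℤ) : F) *
      (θ.D (Kc c l) y * (x i ^ ((l i : ℕ) - 1) * ∏ j ∈ Finset.univ.erase i, x j ^ (l j : ℕ)))
    with hV
  have expand : θ.D (Finsupp.single i 1) (Acoef θ x c y)
      = ∑ l : Fin m → Fin p, (U l + V l) := by
    unfold Acoef
    rw [D_sum]
    apply Finset.sum_congr rfl
    intro l _
    rw [coef_eq, d_intCast_mul, D_single_mul, d_X θ x hx i (fun j => (l j : ℕ)),
      D_single_D, Kc_apply, nsmul_eq_mul]
    simp only [hU, hV]
    push_cast
    ring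
  have hUtop : ∀ l : Fin m → Fin p, ¬ ((l i : ℕ) + 1 < p) → U l = 0 := by
    intro l hlt
    have hcp : (l i : ℕ) + 1 = p := by
      have := (l i).isLt
      omega
    have hnat : p ∣ (∏ μ, ((c μ : ℕ) + (l μ : ℕ)).choose (c μ : ℕ)) *
        ((c i : ℕ) + (l i : ℕ) + 1) := by
      rcases Nat.eq_zero_or_pos (c i : ℕ) with hc0 | hc0
      · have hB : (c i : ℕ) + (l i : ℕ) + 1 = p := by omega
        rw [hB]
        exact dvd_mul_left p _
      · have h1 : p ∣ ((c i : ℕ) + (l i : ℕ)).choose (c i : ℕ) :=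
          Nat.Prime.dvd_choose_add hp (c i).isLt (l i).isLt (by omega)
        exact Dvd.dvd.mul_right
          (h1.trans (Finset.dvd_prod_of_mem
            (fun μ => ((c μ : ℕ) + (l μ : ℕ)).choose (c μ : ℕ)) (Finset.mem_univ i))) _
    simp only [hU]
    apply mul_eq_zero_of_left
    rw [CharP.intCast_eq_zero_iff F p, mul_assoc]
    apply Dvd.dvd.mul_left
    exact_mod_cast hnat
  have hVzero : ∀ l : Fin m → Fin p, (l i : ℕ) = 0 → V l = 0 := by
    intro l h
    simp only [hV]
    rw [h]
    norm_num
  rw [expand, Finset.sum_add_distrib]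
  have hUs : (∑ l : Fin m → Fin p, U l) = ∑ l ∈ Finset.univ.filter
      (fun l : Fin m → Fin p => (l i : ℕ) + 1 < p), U l :=
    (Finset.sum_filter_of_ne (fun l _ h => by
      by_contra hc
      exact h (hUtop l hc))).symm
  have hVs : (∑ l : Fin m → Fin p, V l) = ∑ l ∈ Finset.univ.filter
      (fun l : Fin m → Fin p => (l i : ℕ) ≠ 0), V l :=
    (Finset.sum_filter_of_ne (fun l _ h => by
      intro hc
      exact h (hVzero l hc))).symm
  have hmatch : (∑ l ∈ Finset.univ.filter
      (fun l : Fin m → Fin p => (l i : ℕ) + 1 < p), - U l)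
      = ∑ l ∈ Finset.univ.filter (fun l : Fin m → Fin p => (l i : ℕ) ≠ 0), V l := by
    refine Finset.sum_bij' (fun l _ => Function.update l i
        (⟨((l i : ℕ) + 1) % p, Nat.mod_lt _ hp.pos⟩ : Fin p))
      (fun l _ => Function.update l i
        (⟨(l i : ℕ) - 1, Nat.lt_of_le_of_lt (Nat.sub_le _ _) (l i).isLt⟩ : Fin p))
      ?_ ?_ ?_ ?_ ?_
    · intro l hl
      simp only [Finset.mem_filter, Finset.mem_univ, true_and] at hl ⊢
      rw [Function.update_self]
      show ((l i : ℕ) + 1) % p ≠ 0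
      rw [Nat.mod_eq_of_lt hl]
      omega
    · intro l hl
      simp only [Finset.mem_filter, Finset.mem_univ, true_and] at hl ⊢
      rw [Function.update_self]
      show (l i : ℕ) - 1 + 1 < p
      have := (l i).isLt
      omega
    · intro l hl
      simp only [Finset.mem_filter, Finset.mem_univ, true_and] at hl
      apply update_update_eq
      apply Fin.ext
      show (Function.update l i
        (⟨((l i : ℕ) + 1) % p, Nat.mod_lt _ hp.pos⟩ : Fin p) i : ℕ) - 1 = (l i : ℕ)
      rw [Function.update_self]
      show ((l i : ℕ) + 1) % p - 1 = (l i : ℕ)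
      rw [Nat.mod_eq_of_lt hl]
      omega
    · intro l hl
      simp only [Finset.mem_filter, Finset.mem_univ, true_and] at hl
      apply update_update_eq
      apply Fin.ext
      show ((Function.update l i (⟨(l i : ℕ) - 1,
          Nat.lt_of_le_of_lt (Nat.sub_le _ _) (l i).isLt⟩ : Fin p) i : ℕ) + 1) % p
        = (l i : ℕ)
      rw [Function.update_self]
      show ((l i : ℕ) - 1 + 1) % p = (l i : ℕ)
      have h1 : (l i : ℕ) - 1 + 1 = (l i : ℕ) := by omega
      rw [h1, Nat.mod_eq_of_lt (l i).isLt]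
    · -- the matching term computation
      intro l hl
      simp only [Finset.mem_filter, Finset.mem_univ, true_and] at hl
      set w : Fin p := (⟨((l i : ℕ) + 1) % p, Nat.mod_lt _ hp.pos⟩ : Fin p) with hwdef
      have hw : (w : ℕ) = (l i : ℕ) + 1 := Nat.mod_eq_of_lt hl
      set up : Fin m → Fin p := Function.update l i w with hupdef
      have hupi : (up i : ℕ) = (l i : ℕ) + 1 := by
        rw [hupdef, Function.update_self, hw]
      have hsum2 : (∑ μ, (up μ : ℕ)) = (∑ μ, (l μ : ℕ)) + 1 := by
        rw [hupdef, sum_update_nat hp.pos, hw, sum_erase_nat l i]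
        omega
      have hnb2 : (∏ μ, ((c μ : ℕ) + (up μ : ℕ)).choose (c μ : ℕ))
          = ((c i : ℕ) + (l i : ℕ) + 1).choose (c i : ℕ) *
            ∏ μ ∈ Finset.univ.erase i, ((c μ : ℕ) + (l μ : ℕ)).choose (c μ : ℕ) := by
        rw [← Finset.mul_prod_erase Finset.univ
          (fun μ => ((c μ : ℕ) + (up μ : ℕ)).choose (c μ : ℕ)) (Finset.mem_univ i)]
        congr 1
        · have harg : (c i : ℕ) + ((l i : ℕ) + 1) = (c i : ℕ) + (l i : ℕ) + 1 := by omega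
          rw [hupi, harg]
        · exact Finset.prod_congr rfl (fun μ hμ => by
            rw [hupdef, Function.update_of_ne (Finset.ne_of_mem_erase hμ)])
      have hnb1 : (∏ μ, ((c μ : ℕ) + (l μ : ℕ)).choose (c μ : ℕ))
          = ((c i : ℕ) + (l i : ℕ)).choose (c i : ℕ) *
            ∏ μ ∈ Finset.univ.erase i, ((c μ : ℕ) + (l μ : ℕ)).choose (c μ : ℕ) :=
        (Finset.mul_prod_erase Finset.univ _ (Finset.mem_univ i)).symm
      have hK2 : Kc c up = Kc c l + Finsupp.single i 1 := by
        rw [hupdef]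
        exact Kc_update c l i w hw
      have hxe : (∏ j ∈ Finset.univ.erase i, x j ^ (up j : ℕ))
          = ∏ j ∈ Finset.univ.erase i, x j ^ (l j : ℕ) :=
        Finset.prod_congr rfl (fun j hj => by
          rw [hupdef, Function.update_of_ne (Finset.ne_of_mem_erase hj)])
      have hxu : (∏ j, x j ^ (l j : ℕ))
          = x i ^ (l i : ℕ) * ∏ j ∈ Finset.univ.erase i, x j ^ (l j : ℕ) :=
        (Finset.mul_prod_erase Finset.univ _ (Finset.mem_univ i)).symm
      simp only [hU, hV]
      rw [hsum2, hnb2, hnb1, hK2, hxe, hxu, hupi]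
      have hcs : ((((c i : ℕ) + (l i : ℕ) + 1).choose (c i : ℕ) * ((l i : ℕ) + 1) : ℕ) : F)
          = ((((c i : ℕ) + (l i : ℕ)).choose (c i : ℕ) *
              ((c i : ℕ) + (l i : ℕ) + 1) : ℕ) : F) := by
        rw [choose_shift]
      rw [Nat.add_sub_cancel]
      push_cast at hcs ⊢
      linear_combination ((-1 : F) ^ (∑ μ, (l μ : ℕ)) *
        (∏ μ ∈ Finset.univ.erase i, ((((c μ : ℕ) + (l μ : ℕ)).choose (c μ : ℕ) : ℕ) : F)) *
        θ.D (Kc c l + Finsupp.single i 1) y * x i ^ (l i : ℕ) *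
        (∏ j ∈ Finset.univ.erase i, x j ^ (l j : ℕ))) * hcs
  rw [hUs, hVs, ← hmatch, ← Finset.sum_add_distrib]
  apply Finset.sum_eq_zero
  intro l _
  ring
end MBA

/-- Let `F` be a field of characteristic `p > 0` with a non-degenerate `m`-variate
iterative derivation `θ`, and `x_1,…,x_m ∈ F` with `θ^{(e_i)}(x_j) = δ_{ij}`. Let
`F_1 = ∩ ker θ^{(e_i)}` (a subfield of `F`). Then the `p^m` monomials
`x_1^{c_1}⋯x_m^{c_m}` (`0 ≤ c_j ≤ p−1`) form a basis of `F` over `F_1`;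
in particular `[F : F_1] = p^m`. -/
theorem monomials_basis_over_kernel
    (m p : ℕ) (hp : p.Prime) (F : Type) [Field F] [CharP F p]
    (θ : IterativeDerivation m F) (hθ : θ.Nondegenerate)
    (x : Fin m → F)
    (hx : ∀ i j : Fin m, θ.D (Finsupp.single i 1) (x j) = if i = j then 1 else 0)
    (F₁ : Subfield F)
    (hF₁ : (F₁ : Set F) = {y : F | ∀ i : Fin m, θ.D (Finsupp.single i 1) y = 0}) :
    LinearIndependent F₁ (fun c : Fin m → Fin p => ∏ j : Fin m, x j ^ (c j : ℕ)) ∧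
    Submodule.span F₁
      (Set.range fun c : Fin m → Fin p => ∏ j : Fin m, x j ^ (c j : ℕ)) = ⊤ ∧
    Module.finrank F₁ F = p ^ m := by
  classical
  have hker_mem : ∀ z : F, z ∈ F₁ ↔ ∀ i : Fin m, θ.D (Finsupp.single i 1) z = 0 := by
    intro z
    have : z ∈ F₁ ↔ z ∈ (F₁ : Set F) := Iff.rfl
    rw [this, hF₁]
    rfl
  have hsmul : ∀ (a : F₁) (z : F), a • z = (a : F) * z := fun a z => rfl
  -- linear independence
  have hli : LinearIndependent F₁ (fun c : Fin m → Fin p => ∏ j : Fin m, x j ^ (c j : ℕ)) := by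
    rw [Fintype.linearIndependent_iff]
    intro g hg c
    have hb := MBA.indep_aux hp θ x hx (m * p) (fun c => (g c : F))
      (fun c i => (hker_mem (g c : F)).mp (g c).2 i)
      (fun c _ => by
        calc (∑ μ, (c μ : ℕ)) ≤ ∑ _μ : Fin m, p :=
              Finset.sum_le_sum (fun μ _ => le_of_lt (c μ).isLt)
          _ = m * p := by
              rw [Finset.sum_const, Finset.card_univ, Fintype.card_fin, smul_eq_mul])
      (by
        rw [← hg]
        exact Finset.sum_congr rfl (fun c _ => (hsmul (g c) _).symm))
      c
    exact Subtype.ext hb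
  have hsp : Submodule.span F₁
      (Set.range fun c : Fin m → Fin p => ∏ j : Fin m, x j ^ (c j : ℕ)) = ⊤ := by
    rw [eq_top_iff]
    intro y _
    have hy := MBA.span_identity hp θ x y
    rw [← hy]
    apply Submodule.sum_mem
    intro c _
    have hmem : MBA.Acoef θ x c y ∈ F₁ :=
      (hker_mem _).mpr (fun i => MBA.d_Acoef hp θ x hx c y i)
    have hrw : MBA.Acoef θ x c y * ∏ j, x j ^ (c j : ℕ)
        = (⟨MBA.Acoef θ x c y, hmem⟩ : F₁) • (∏ j, x j ^ (c j : ℕ)) := rfl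
    rw [hrw]
    exact Submodule.smul_mem _ _ (Submodule.subset_span (Set.mem_range_self c))
  refine ⟨hli, hsp, ?_⟩
  have B : Module.Basis (Fin m → Fin p) F₁ F := Module.Basis.mk hli (by rw [hsp])
  rw [Module.finrank_eq_card_basis B, Fintype.card_fun, Fintype.card_fin, Fintype.card_fin]
end

section
/- Let (F,θ) be an ID-field of characteristic p > 0 with field of constants K = C_F, let (R,θ_R) be a PPV-ring over F for an IDE θ(y) = A·y, and let E = Quot(R) with the extended iterative derivation θ_E(r/s) = θ_R(r)·θ_R(s)^{−1}. Then R is exactly the set of elements of E which are differentially finite over F. -/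
open scoped TensorProduct

/-- An ID-ring extension: the iterative derivation `θR` on `R` restricts to `θF` on `F`
(via the algebra map). -/
def IterativeDerivation.Extends {m : ℕ} {F R : Type*} [CommRing F] [CommRing R] [Algebra F R]
    (θF : IterativeDerivation m F) (θR : IterativeDerivation m R) : Prop :=
  ∀ (k : Fin m →₀ ℕ) (f : F), θR.D k (algebraMap F R f) = algebraMap F R (θF.D k f)

/-- `R` is ID-simple: no nontrivial ideals stable under all the `θ^{(k)}`. -/
def IterativeDerivation.IDSimple {m : ℕ} {R : Type*} [CommRing R]
    (θ : IterativeDerivation m R) : Prop :=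
  ∀ I : Ideal R, (∀ (k : Fin m →₀ ℕ), ∀ x ∈ I, θ.D k x ∈ I) → I = ⊥ ∨ I = ⊤

/-- The coefficient matrices `A_k` of an iterative differential equation `θ(y) = A·y`
over `(F, θ)`: `A_0 = 1` and
`binom(k+l,l)·A_{k+l} = Σ_{i+j=l} θ^{(i)}(A_k)·A_j` for all `k, l`. -/
def IsIDE {m n : ℕ} {F : Type*} [Field F] (θ : IterativeDerivation m F)
    (A : (Fin m →₀ ℕ) → Matrix (Fin n) (Fin n) F) : Prop :=
  A 0 = 1 ∧
  ∀ k l : Fin m →₀ ℕ,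
    multiChoose l k • A (k + l) =
      ∑ ij ∈ Finset.HasAntidiagonal.antidiagonal l, (A k).map (θ.D ij.1) * A ij.2

/-- `Y ∈ GL_n(R)` is a fundamental solution matrix for the IDE `θ(y) = A·y`:
`θ^{(k)}(Y) = A_k·Y` (entrywise) for all `k`. -/
def IsFundamentalMatrix {m n : ℕ} {F R : Type*} [Field F] [CommRing R] [Algebra F R]
    (θR : IterativeDerivation m R) (A : (Fin m →₀ ℕ) → Matrix (Fin n) (Fin n) F)
    (Y : Matrix (Fin n) (Fin n) R) : Prop :=
  IsUnit Y.det ∧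
  ∀ k : Fin m →₀ ℕ, Y.map (θR.D k) = (A k).map (algebraMap F R) * Y

/-- Condition (4) of a PPV-ring: the constants of `R` are exactly (the images of) the
constants of `F`. -/
def ConstantsEq {m : ℕ} {F R : Type*} [CommRing F] [CommRing R] [Algebra F R]
    (θF : IterativeDerivation m F) (θR : IterativeDerivation m R) : Prop :=
  ∀ r : R, (∀ k : Fin m →₀ ℕ, k ≠ 0 → θR.D k r = 0) →
    ∃ f : F, (∀ k : Fin m →₀ ℕ, k ≠ 0 → θF.D k f = 0) ∧ algebraMap F R f = r

/-- `(R, θR)` is a pseudo Picard–Vessiot ring over `(F, θF)` for the IDE given by `A`: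
it is ID-simple, has a fundamental solution matrix `Y` which together with `det(Y)⁻¹`
generates `R` as an `F`-algebra, and has the same constants as `F`. -/
def IsPPVRing {m n : ℕ} {F R : Type*} [Field F] [CommRing R] [Algebra F R]
    (θF : IterativeDerivation m F) (θR : IterativeDerivation m R)
    (A : (Fin m →₀ ℕ) → Matrix (Fin n) (Fin n) F) : Prop :=
  θF.Extends θR ∧ θR.IDSimple ∧
  (∃ Y : Matrix (Fin n) (Fin n) R, IsFundamentalMatrix θR A Y ∧
    Algebra.adjoin F
      ((Set.range fun ij : Fin n × Fin n => Y ij.1 ij.2) ∪ {Ring.inverse Y.det}) = ⊤) ∧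
  ConstantsEq θF θR


/-! ### Auxiliary lemmas -/

section Aux

open IterativeDerivation

variable {m : ℕ}

/-- Total degree of a multi-index. -/
def mdeg (k : Fin m →₀ ℕ) : ℕ := k.sum fun _ e => e

lemma mdeg_add (a b : Fin m →₀ ℕ) : mdeg (a + b) = mdeg a + mdeg b :=
  Finsupp.sum_add_index' (fun _ => rfl) (fun _ _ _ => rfl)

lemma mdeg_pos {k : Fin m →₀ ℕ} (hk : k ≠ 0) : 0 < mdeg k := by
  rcases Nat.eq_zero_or_pos (mdeg k) with h | h
  · exfalso
    apply hk
    ext a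
    have hle : k a ≤ mdeg k := by
      by_cases ha : a ∈ k.support
      · exact Finset.single_le_sum (fun _ _ => Nat.zero_le _) ha
      · simp [Finsupp.notMem_support_iff.mp ha]
    simp only [Finsupp.coe_zero, Pi.zero_apply]
    omega
  · exact h

lemma mdeg_lt_of_add {a b k : Fin m →₀ ℕ} (hab : a + b = k) (hb : b ≠ 0) :
    mdeg a < mdeg k := by
  have := mdeg_add a b
  rw [hab] at this
  have := mdeg_pos hb
  omega

variable {S : Type*} [CommRing S] (θ : IterativeDerivation m S)

lemma D_zeroIdx (x : S) : θ.D 0 x = x := θ.coeff_zero x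

lemma D_map_zero (k : Fin m →₀ ℕ) : θ.D k (0 : S) = 0 := by
  simp [IterativeDerivation.D]

lemma D_map_add (k : Fin m →₀ ℕ) (x y : S) : θ.D k (x + y) = θ.D k x + θ.D k y := by
  simp [IterativeDerivation.D]

lemma D_map_one (k : Fin m →₀ ℕ) : θ.D k (1 : S) = if k = 0 then 1 else 0 := by
  simp [IterativeDerivation.D, MvPowerSeries.coeff_one]

lemma D_map_mul (k : Fin m →₀ ℕ) (x y : S) :
    θ.D k (x * y) = ∑ ab ∈ Finset.HasAntidiagonal.antidiagonal k, θ.D ab.1 x * θ.D ab.2 y := by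
  simp [IterativeDerivation.D, MvPowerSeries.coeff_mul]

lemma D_D (i j : Fin m →₀ ℕ) (x : S) :
    θ.D i (θ.D j x) = multiChoose i j • θ.D (i + j) x := θ.iterate i j x

variable {F : Type*} [CommRing F] [Algebra F S] (θF : IterativeDerivation m F)

lemma D_map_smul (hext : θF.Extends θ) (k : Fin m →₀ ℕ) (f : F) (x : S) :
    θ.D k (f • x) = ∑ ab ∈ Finset.HasAntidiagonal.antidiagonal k, θF.D ab.1 f • θ.D ab.2 x := by
  rw [Algebra.smul_def, D_map_mul]
  refine Finset.sum_congr rfl fun ab _ => ?_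
  rw [hext, ← Algebra.smul_def]

/-- A span of a set whose elements have all derivatives inside the span is stable. -/
lemma span_stable (hext : θF.Extends θ) (s : Set S)
    (h : ∀ x ∈ s, ∀ k : Fin m →₀ ℕ, θ.D k x ∈ Submodule.span F s) :
    ∀ v ∈ Submodule.span F s, ∀ k : Fin m →₀ ℕ, θ.D k v ∈ Submodule.span F s := by
  intro v hv
  induction hv using Submodule.span_induction with
  | mem x hx => exact h x hx
  | zero => intro k; rw [D_map_zero]; exact Submodule.zero_mem _
  | add x y hx hy ihx ihy =>
      intro k; rw [D_map_add]; exact Submodule.add_mem _ (ihx k) (ihy k)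
  | smul a x hx ih =>
      intro k
      rw [D_map_smul θ θF hext]
      exact Submodule.sum_mem _ fun ab _ => Submodule.smul_mem _ _ (ih ab.2)

end Aux

section Forward

open IterativeDerivation

variable {m n : ℕ} {F R : Type*} [Field F] [CommRing R] [Algebra F R]

/-- Derivatives of the determinant of a fundamental matrix are `F`-multiples of it. -/
lemma det_deriv (θF : IterativeDerivation m F) (θR : IterativeDerivation m R)
    (A : (Fin m →₀ ℕ) → Matrix (Fin n) (Fin n) F)
    (Y : Matrix (Fin n) (Fin n) R)
    (hY2 : ∀ k : Fin m →₀ ℕ, Y.map (θR.D k) = (A k).map (algebraMap F R) * Y) :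
    ∃ c : (Fin m →₀ ℕ) → F, ∀ k, θR.D k Y.det = c k • Y.det := by
  classical
  set B : Matrix (Fin n) (Fin n) (MvPowerSeries (Fin m) F) :=
    Matrix.of fun i j => (fun k => A k i j : MvPowerSeries (Fin m) F) with hB
  have hBcoeff : ∀ (k : Fin m →₀ ℕ) (i j : Fin n),
      MvPowerSeries.coeff k (B i j) = A k i j := fun _ _ _ => rfl
  set φ : MvPowerSeries (Fin m) F →+* MvPowerSeries (Fin m) R :=
    MvPowerSeries.map (algebraMap F R) with hφ
  set C : R →+* MvPowerSeries (Fin m) R := MvPowerSeries.C with hC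
  have key : θR.toRingHom.mapMatrix Y = φ.mapMatrix B * C.mapMatrix Y := by
    ext i j k
    have lhs : MvPowerSeries.coeff k ((θR.toRingHom.mapMatrix Y) i j)
        = θR.D k (Y i j) := rfl
    rw [lhs]
    have h1 : θR.D k (Y i j) = (Y.map (θR.D k)) i j := rfl
    rw [h1, hY2 k, Matrix.mul_apply]
    rw [RingHom.mapMatrix_apply, RingHom.mapMatrix_apply, Matrix.mul_apply, map_sum]
    refine Finset.sum_congr rfl fun l _ => ?_
    simp only [Matrix.map_apply]
    rw [MvPowerSeries.coeff_mul_C, MvPowerSeries.coeff_map, hBcoeff]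
  refine ⟨fun k => MvPowerSeries.coeff k B.det, fun k => ?_⟩
  have hdet : θR.toRingHom Y.det = φ B.det * C Y.det := by
    rw [RingHom.map_det, key, Matrix.det_mul, ← RingHom.map_det, ← RingHom.map_det]
  have : θR.D k Y.det = MvPowerSeries.coeff k (φ B.det * C Y.det) := by
    rw [IterativeDerivation.D, hdet]
  rw [this, hC, MvPowerSeries.coeff_mul_C, hφ, MvPowerSeries.coeff_map,
    Algebra.smul_def]

/-- Derivatives of the inverse of the determinant are `F`-multiples of it. -/
lemma inv_det_deriv (θR : IterativeDerivation m R)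
    (d u : R) (hdu : d * u = 1)
    (c : (Fin m →₀ ℕ) → F) (hc : ∀ k, θR.D k d = c k • d) :
    ∀ k : Fin m →₀ ℕ, ∃ e : F, θR.D k u = e • u := by
  classical
  suffices H : ∀ N : ℕ, ∀ k : Fin m →₀ ℕ, mdeg k = N → ∃ e : F, θR.D k u = e • u by
    intro k; exact H (mdeg k) k rfl
  intro N
  induction N using Nat.strong_induction_on with
  | _ N IH =>
    intro k hk
    rcases eq_or_ne k 0 with rfl | hk0
    · exact ⟨1, by rw [D_zeroIdx, one_smul]⟩
    · have h1 : θR.D k (d * u) = 0 := by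
        rw [hdu, D_map_one, if_neg hk0]
      rw [D_map_mul] at h1
      have hmem : ((0 : Fin m →₀ ℕ), k) ∈ Finset.HasAntidiagonal.antidiagonal k := by
        simp [Finset.HasAntidiagonal.mem_antidiagonal]
      rw [← Finset.add_sum_erase _ _ hmem] at h1
      have h0 : θR.D (0 : Fin m →₀ ℕ) d * θR.D k u = d * θR.D k u := by
        rw [D_zeroIdx]
      rw [h0] at h1
      -- rewrite each remaining term as an algebra scalar
      have hterm : ∀ ab ∈ (Finset.HasAntidiagonal.antidiagonal k).erase ((0 : Fin m →₀ ℕ), k),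
          ∃ e : F, θR.D ab.1 d * θR.D ab.2 u = e • (1 : R) := by
        intro ab hab
        have hab' := Finset.HasAntidiagonal.mem_antidiagonal.mp (Finset.mem_of_mem_erase hab)
        have hne := Finset.ne_of_mem_erase hab
        have hab1 : ab.1 ≠ 0 := by
          intro h
          apply hne
          have : ab.2 = k := by rw [← hab', h, zero_add]
          exact Prod.ext h this
        have hlt : mdeg ab.2 < N := by
          rw [← hk]
          have : ab.2 + ab.1 = k := by rw [add_comm]; exact hab'
          exact mdeg_lt_of_add this hab1
        obtain ⟨e, he⟩ := IH (mdeg ab.2) hlt ab.2 rfl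
        refine ⟨c ab.1 * e, ?_⟩
        rw [hc ab.1, he, smul_mul_smul_comm, hdu]
      choose e he using hterm
      have hsum : ∑ ab ∈ (Finset.HasAntidiagonal.antidiagonal k).erase ((0 : Fin m →₀ ℕ), k),
          θR.D ab.1 d * θR.D ab.2 u =
          (∑ ab ∈ ((Finset.HasAntidiagonal.antidiagonal k).erase ((0 : Fin m →₀ ℕ), k)).attach,
            e ab.1 ab.2) • (1 : R) := by
        rw [← Finset.sum_attach ((Finset.HasAntidiagonal.antidiagonal k).erase ((0 : Fin m →₀ ℕ), k))
          (fun ab => θR.D ab.1 d * θR.D ab.2 u)]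
        rw [Finset.sum_smul]
        exact Finset.sum_congr rfl fun ab _ => he ab.1 ab.2
      set s : F := ∑ ab ∈ ((Finset.HasAntidiagonal.antidiagonal k).erase ((0 : Fin m →₀ ℕ), k)).attach,
        e ab.1 ab.2
      have hd : d * θR.D k u = (-s) • (1 : R) := by
        rw [hsum] at h1
        have := eq_neg_of_add_eq_zero_left h1
        rw [this, neg_smul]
      refine ⟨-s, ?_⟩
      have : u * (d * θR.D k u) = θR.D k u := by
        rw [← mul_assoc, mul_comm u d, hdu, one_mul]
      rw [← this, hd, mul_smul_comm, mul_one]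

/-- Every element of a PPV-ring lies in a finitely generated stable submodule. -/
lemma exists_stable_fg (θF : IterativeDerivation m F) (θR : IterativeDerivation m R)
    (hext : θF.Extends θR)
    (A : (Fin m →₀ ℕ) → Matrix (Fin n) (Fin n) F)
    (Y : Matrix (Fin n) (Fin n) R) (hY : IsFundamentalMatrix θR A Y)
    (hadj : Algebra.adjoin F
      ((Set.range fun ij : Fin n × Fin n => Y ij.1 ij.2) ∪ {Ring.inverse Y.det}) = ⊤)
    (r : R) :
    ∃ V : Submodule F R, V.FG ∧ (∀ (k : Fin m →₀ ℕ), ∀ v ∈ V, θR.D k v ∈ V) ∧ r ∈ V := by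
  classical
  have hr : r ∈ Algebra.adjoin F
      ((Set.range fun ij : Fin n × Fin n => Y ij.1 ij.2) ∪ {Ring.inverse Y.det}) := by
    rw [hadj]; trivial
  induction hr using Algebra.adjoin_induction with
  | mem x hx =>
    rcases hx with hx | hx
    · -- an entry of Y
      refine ⟨Submodule.span F (Set.range fun ij : Fin n × Fin n => Y ij.1 ij.2),
        Submodule.fg_span (Set.finite_range _), ?_, Submodule.subset_span hx⟩
      intro k v hv
      refine span_stable θR θF hext _ ?_ v hv k
      rintro _ ⟨ij, rfl⟩ k'
      have h1 : θR.D k' (Y ij.1 ij.2) = (Y.map (θR.D k')) ij.1 ij.2 := rfl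
      rw [h1, hY.2 k', Matrix.mul_apply]
      refine Submodule.sum_mem _ fun l _ => ?_
      rw [Matrix.map_apply, ← Algebra.smul_def]
      exact Submodule.smul_mem _ _ (Submodule.subset_span ⟨(l, ij.2), rfl⟩)
    · -- the inverse of the determinant
      rcases hx with rfl
      obtain ⟨c, hc⟩ := det_deriv θF θR A Y hY.2
      have hdu : Y.det * Ring.inverse Y.det = 1 := Ring.mul_inverse_cancel _ hY.1
      have hder := inv_det_deriv θR Y.det (Ring.inverse Y.det) hdu c hc
      refine ⟨Submodule.span F {Ring.inverse Y.det},
        Submodule.fg_span (Set.finite_singleton _), ?_,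
        Submodule.subset_span rfl⟩
      intro k v hv
      refine span_stable θR θF hext _ ?_ v hv k
      rintro x hx k'
      rcases hx with rfl
      obtain ⟨e, he⟩ := hder k'
      rw [he]
      exact Submodule.smul_mem _ _ (Submodule.subset_span rfl)
  | algebraMap f =>
    refine ⟨Submodule.span F {(1 : R)}, Submodule.fg_span (Set.finite_singleton _), ?_, ?_⟩
    · intro k v hv
      refine span_stable θR θF hext _ ?_ v hv k
      rintro x hx k'
      rcases hx with rfl
      rw [D_map_one]
      split
      · exact Submodule.subset_span rfl
      · exact Submodule.zero_mem _
    · rw [Algebra.algebraMap_eq_smul_one]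
      exact Submodule.smul_mem _ f (Submodule.subset_span rfl)
  | add x y hx hy ihx ihy =>
    obtain ⟨V, hVfg, hVs, hxV⟩ := ihx
    obtain ⟨W, hWfg, hWs, hyW⟩ := ihy
    refine ⟨V ⊔ W, hVfg.sup hWfg, ?_, Submodule.add_mem _
      (Submodule.mem_sup_left hxV) (Submodule.mem_sup_right hyW)⟩
    intro k v hv
    obtain ⟨a, ha, b, hb, rfl⟩ := Submodule.mem_sup.mp hv
    rw [D_map_add]
    exact Submodule.add_mem _ (Submodule.mem_sup_left (hVs k a ha))
      (Submodule.mem_sup_right (hWs k b hb))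
  | mul x y hx hy ihx ihy =>
    obtain ⟨V, hVfg, hVs, hxV⟩ := ihx
    obtain ⟨W, hWfg, hWs, hyW⟩ := ihy
    refine ⟨V * W, hVfg.mul hWfg, ?_, Submodule.mul_mem_mul hxV hyW⟩
    intro k v hv
    revert k
    refine Submodule.mul_induction_on hv ?_ ?_
    · intro a ha b hb k
      rw [D_map_mul]
      exact Submodule.sum_mem _ fun ab _ =>
        Submodule.mul_mem_mul (hVs ab.1 a ha) (hWs ab.2 b hb)
    · intro a b iha ihb k
      rw [D_map_add]
      exact Submodule.add_mem _ (iha k) (ihb k)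

end Forward

/-- Let `(R, θR)` be a PPV-ring over the ID-field `(F, θ)` of characteristic `p > 0`,
and `E = Quot(R)` with the extended iterative derivation. Then `R` is exactly the set of
elements of `E` which are differentially finite over `F`, i.e. whose derivatives span a
finite-dimensional `F`-subspace of `E`. -/
theorem ppvRing_eq_diffFinite
    (m n p : ℕ) (hp : p.Prime)
    (F R E : Type) [Field F] [CharP F p] [CommRing R] [IsDomain R] [Algebra F R]
    [Field E] [Algebra R E] [IsFractionRing R E] [Algebra F E] [IsScalarTower F R E]
    (θF : IterativeDerivation m F) (θR : IterativeDerivation m R)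
    (θE : IterativeDerivation m E)
    (A : (Fin m →₀ ℕ) → Matrix (Fin n) (Fin n) F) (hA : IsIDE θF A)
    (hPPV : IsPPVRing θF θR A)
    (hRE : ∀ (k : Fin m →₀ ℕ) (r : R), θE.D k (algebraMap R E r) = algebraMap R E (θR.D k r)) :
    Set.range (algebraMap R E) =
      {x : E | Module.Finite F
        (Submodule.span F (Set.range fun k : Fin m →₀ ℕ => θE.D k x))} := by
    classical
  obtain ⟨hext, hsimple, ⟨Y, hY, hadj⟩, _hconst⟩ := hPPV
  ext x
  simp only [Set.mem_setOf_eq, Set.mem_range]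
  constructor
  · -- elements of R are differentially finite
    rintro ⟨r, rfl⟩
    obtain ⟨V, hVfg, hVstab, hrV⟩ := exists_stable_fg θF θR hext A Y hY hadj r
    set φ : R →ₗ[F] E := (IsScalarTower.toAlgHom F R E).toLinearMap with hφ
    have hle : Submodule.span F (Set.range fun k : Fin m →₀ ℕ => θE.D k (algebraMap R E r))
        ≤ V.map φ := by
      rw [Submodule.span_le]
      rintro _ ⟨k, rfl⟩
      simp only [SetLike.mem_coe]
      show θE.D k (algebraMap R E r) ∈ V.map φ
      rw [hRE]
      exact ⟨θR.D k r, hVstab k r hrV, rfl⟩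
    haveI : Module.Finite F (V.map φ) := Module.Finite.iff_fg.mpr (hVfg.map φ)
    exact Submodule.finiteDimensional_of_le hle
  · -- differentially finite elements lie in R
    intro hfin
    set V := Submodule.span F (Set.range fun k : Fin m →₀ ℕ => θE.D k x) with hV
    have hEF : θF.Extends θE := by
      intro k f
      rw [IsScalarTower.algebraMap_apply F R E, hRE, hext,
        ← IsScalarTower.algebraMap_apply F R E]
    have hVstab : ∀ v ∈ V, ∀ k : Fin m →₀ ℕ, θE.D k v ∈ V := by
      refine span_stable θE θF hEF _ ?_
      rintro _ ⟨j, rfl⟩ k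
      rw [D_D]
      have hmem' : θE.D (k + j) x ∈ Submodule.span F
          (Set.range fun k : Fin m →₀ ℕ => θE.D k x) :=
        Submodule.subset_span ⟨k + j, rfl⟩
      exact nsmul_mem hmem' _
    set Rng : Subalgebra F E := (IsScalarTower.toAlgHom F R E).range with hRng
    have hRngmem : ∀ y : E, y ∈ Rng ↔ ∃ s : R, algebraMap R E s = y := fun y =>
      AlgHom.mem_range _
    set I : Ideal R :=
      { carrier := {r : R | ∀ v ∈ V, algebraMap R E r * v ∈ Rng}
        add_mem' := by
          intro a b ha hb v hv
          rw [map_add, add_mul]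
          exact add_mem (ha v hv) (hb v hv)
        zero_mem' := by
          intro v hv
          rw [map_zero, zero_mul]
          exact zero_mem _
        smul_mem' := by
          intro cc r hr v hv
          rw [smul_eq_mul, map_mul, mul_assoc]
          obtain ⟨t, ht⟩ := (hRngmem _).mp (hr v hv)
          rw [← ht, ← map_mul]
          exact (hRngmem _).mpr ⟨cc * t, rfl⟩ } with hIdef
    have hImem : ∀ r : R, r ∈ I ↔ ∀ v ∈ V, algebraMap R E r * v ∈ Rng := fun r =>
      Iff.rfl
    have hIstab : ∀ (k : Fin m →₀ ℕ), ∀ r ∈ I, θR.D k r ∈ I := by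
      suffices H : ∀ N : ℕ, ∀ k : Fin m →₀ ℕ, mdeg k = N → ∀ r ∈ I, θR.D k r ∈ I by
        intro k r hr; exact H (mdeg k) k rfl r hr
      intro N
      induction N using Nat.strong_induction_on with
      | _ N IH =>
        intro k hk r hr
        rcases eq_or_ne k 0 with rfl | hk0
        · rw [D_zeroIdx]; exact hr
        · rw [hImem]
          intro v hv
          obtain ⟨t, ht⟩ := (hRngmem _).mp ((hImem r).mp hr v hv)
          have h1 : θE.D k (algebraMap R E r * v) ∈ Rng := by
            rw [← ht, hRE]
            exact (hRngmem _).mpr ⟨θR.D k t, rfl⟩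
          have h2 : θE.D k (algebraMap R E r * v) =
              ∑ ab ∈ Finset.HasAntidiagonal.antidiagonal k,
                algebraMap R E (θR.D ab.1 r) * θE.D ab.2 v := by
            rw [D_map_mul]
            exact Finset.sum_congr rfl fun ab _ => by rw [hRE]
          have hmemk : ((k : Fin m →₀ ℕ), (0 : Fin m →₀ ℕ)) ∈ Finset.HasAntidiagonal.antidiagonal k := by
            simp
          rw [← Finset.add_sum_erase _ _ hmemk] at h2
          have h3 : algebraMap R E (θR.D k r) * v =
              θE.D k (algebraMap R E r * v)
              - ∑ ab ∈ (Finset.HasAntidiagonal.antidiagonal k).erase (k, (0 : Fin m →₀ ℕ)),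
                  algebraMap R E (θR.D ab.1 r) * θE.D ab.2 v := by
            rw [h2, D_zeroIdx]
            ring
          rw [h3]
          refine sub_mem h1 (sum_mem fun ab hab => ?_)
          have hab' := Finset.HasAntidiagonal.mem_antidiagonal.mp (Finset.mem_of_mem_erase hab)
          have hne := Finset.ne_of_mem_erase hab
          have hab2 : ab.2 ≠ 0 := by
            intro h
            apply hne
            have h1' : ab.1 = k := by rw [← hab', h, add_zero]
            exact Prod.ext h1' h
          have hlt : mdeg ab.1 < N := hk ▸ mdeg_lt_of_add hab' hab2
          exact (hImem _).mp (IH (mdeg ab.1) hlt ab.1 rfl r hr)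
            (θE.D ab.2 v) (hVstab v hv ab.2)
    have hfg : V.FG := Module.Finite.iff_fg.mp hfin
    obtain ⟨t, ht⟩ := hfg
    obtain ⟨b, hb⟩ := IsLocalization.exist_integer_multiples_of_finset
      (nonZeroDivisors R) t
    have hbI : (b : R) ∈ I := by
      rw [hImem]
      intro v hv
      rw [← ht] at hv
      induction hv using Submodule.span_induction with
      | mem a ha =>
        obtain ⟨r', hr'⟩ := hb a ha
        rw [Algebra.smul_def] at hr'
        exact (hRngmem _).mpr ⟨r', hr'⟩
      | zero => rw [mul_zero]; exact zero_mem _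
      | add x1 y1 hx1 hy1 ih1 ih2 => rw [mul_add]; exact add_mem ih1 ih2
      | smul f v1 hv1 ih =>
        rw [mul_smul_comm]
        exact Subalgebra.smul_mem _ ih f
    have hbne : (b : R) ≠ 0 := nonZeroDivisors.ne_zero b.2
    have hItop : I = ⊤ := by
      rcases hsimple I (fun k r hr => hIstab k r hr) with h | h
      · exfalso
        apply hbne
        rw [h] at hbI
        exact (Submodule.mem_bot R).mp hbI
      · exact h
    have h1I : (1 : R) ∈ I := hItop ▸ Submodule.mem_top
    have hxV : x ∈ V := Submodule.subset_span ⟨0, D_zeroIdx θE x⟩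
    obtain ⟨r, hr⟩ := (hRngmem _).mp (by simpa using (hImem 1).mp h1I x hxV)
    exact ⟨r, hr⟩
end

section
/- Let p be a prime, F ⊆ E a field extension in characteristic p, and h ∈ ℕ. Suppose that for all r, s ∈ E the element (r⊗s − s⊗r)^{p^h} equals 0 in E ⊗_F E. Then x^{p^h} ∈ F for every x ∈ E, i.e. E/F is purely inseparable of exponent ≤ h. -/
open scoped TensorProduct

/-- Let `E/F` be a field extension in characteristic `p` and `h ∈ ℕ` such that
`(r ⊗ s − s ⊗ r)^{p^h} = 0` in `E ⊗_F E` for all `r, s ∈ E`. Then `x^{p^h} ∈ F` for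
every `x ∈ E`, i.e. `E/F` is purely inseparable of exponent `≤ h`. -/
theorem purelyInseparable_of_tensor_pow_eq_zero
    (p h : ℕ) (hp : p.Prime) (F E : Type) [Field F] [Field E] [Algebra F E]
    [CharP F p]
    (hT : ∀ r s : E, (r ⊗ₜ[F] s - s ⊗ₜ[F] r) ^ p ^ h = (0 : E ⊗[F] E)) :
    ∀ x : E, x ^ p ^ h ∈ (algebraMap F E).range := by
  intro x
  classical
  -- E ⊗ E is nontrivial (it maps onto E via multiplication)
  have hnt : Nontrivial (E ⊗[F] E) := by
    refine ⟨1, 0, fun h10 => ?_⟩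
    have := congrArg (Algebra.TensorProduct.lmul' F (S := E)) h10
    simp at this
  haveI hchar : CharP (E ⊗[F] E) p :=
    charP_of_injective_algebraMap (algebraMap F (E ⊗[F] E)).injective p
  haveI hfact : Fact p.Prime := ⟨hp⟩
  set y := x ^ p ^ h with hy
  -- key: y ⊗ 1 = 1 ⊗ y
  have key : y ⊗ₜ[F] (1 : E) = (1 : E) ⊗ₜ[F] y := by
    have := hT x 1
    rw [sub_pow_char_pow] at this
    rw [Algebra.TensorProduct.tmul_pow, Algebra.TensorProduct.tmul_pow, one_pow] at this
    rw [← hy, sub_eq_zero] at this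
    exact this
  by_contra hmem
  -- 1 and y are linearly independent over F
  have h1 : (1 : E) ∈ ({1, y} : Set E) := by simp
  have h2 : y ∈ ({1, y} : Set E) := by simp
  have hyne : y ∉ Submodule.span F ({1} : Set E) := by
    intro hy'
    rw [Submodule.mem_span_singleton] at hy'
    obtain ⟨c, hc⟩ := hy'
    exact hmem ⟨c, by simpa [Algebra.smul_def] using hc⟩
  have hli : LinearIndependent F ((↑) : ({1, y} : Set E) → E) := by
    rw [show ({1, y} : Set E) = insert y {1} by ext; simp [or_comm]]
    refine (LinearIndepOn.id_insert ?_ hyne)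
    exact LinearIndepOn.singleton one_ne_zero
  -- extend to a basis and take the coordinate functional at y
  let b := Module.Basis.extend hli
  have hne : y ≠ 1 := by
    intro hq
    exact hmem ⟨1, by simp [hq]⟩
  let f : E →ₗ[F] F := b.coord ⟨y, Module.Basis.subset_extend hli h2⟩
  have hf1 : f 1 = 0 := by
    have hb1 : b ⟨1, Module.Basis.subset_extend hli h1⟩ = (1 : E) := Module.Basis.extend_apply_self hli _
    have hr := congrArg b.repr hb1.symm
    rw [Module.Basis.repr_self] at hr
    show b.repr (1 : E) ⟨y, Module.Basis.subset_extend hli h2⟩ = 0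
    rw [hr, Finsupp.single_apply, if_neg]
    intro hq
    exact hne (congrArg Subtype.val hq).symm
  have hfy : f y = 1 := by
    have hby : b ⟨y, Module.Basis.subset_extend hli h2⟩ = y := Module.Basis.extend_apply_self hli _
    have hr := congrArg b.repr hby.symm
    rw [Module.Basis.repr_self] at hr
    show b.repr y ⟨y, Module.Basis.subset_extend hli h2⟩ = 1
    rw [hr, Finsupp.single_apply, if_pos rfl]
  -- apply id ⊗ f to the key identity
  let g : E ⊗[F] E →ₗ[F] E :=
    (TensorProduct.rid F E).toLinearMap ∘ₗ LinearMap.lTensor E f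
  have := congrArg g key
  simp only [g, LinearMap.comp_apply, LinearMap.lTensor_tmul, LinearEquiv.coe_coe,
    TensorProduct.rid_tmul, hf1, hfy, zero_smul, one_smul] at this
  exact one_ne_zero this.symm
end

section
/- Let F be a field of characteristic p > 0 with an m-variate iterative derivation θ, let ℓ ∈ ℕ, and set J_ℓ := { j ∈ ℕ^m \ {0} : j_i < p^ℓ for all i } and F_ℓ := ∩_{j∈J_ℓ} ker(θ^{(j)}). Then θ(F_ℓ) ⊆ F_ℓ[[T_1^{p^ℓ},…,T_m^{p^ℓ}]]; explicitly: for every x ∈ F_ℓ and every k ∈ ℕ^m, one has θ^{(k)}(x) = 0 unless every coordinate of k is divisible by p^ℓ, and θ^{(k)}(x) ∈ F_ℓ for every k ∈ ℕ^m. -/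
open scoped TensorProduct

/-- The index set `J_ℓ = { j ∈ ℕ^m \ {0} : j_i < p^ℓ for all i }`. -/
def Jset (m p ℓ : ℕ) : Set (Fin m →₀ ℕ) :=
  {j : Fin m →₀ ℕ | j ≠ 0 ∧ ∀ i : Fin m, j i < p ^ ℓ}


open scoped TensorProduct

section LucasHelpers

open Finset

variable (p : ℕ) [Fact p.Prime]

private lemma pow_div_pow_mod (a ℓ x : ℕ) (hx : x < ℓ) : a * p ^ ℓ / p ^ x % p = 0 := by
  have h1 : a * p ^ ℓ / p ^ x = a * p ^ (ℓ - x) := by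
    rw [Nat.mul_div_assoc a (pow_dvd_pow p hx.le), Nat.pow_div hx.le (Fact.out : p.Prime).pos]
  rw [h1]
  exact Nat.mod_eq_zero_of_dvd (Dvd.dvd.mul_left (dvd_pow_self p (by omega)) a)


/-- Lucas at level `p^ℓ`, part A: `choose (a·p^ℓ + b) (a·p^ℓ) ≡ 1 mod p` when `b < p^ℓ`. -/
private lemma lucasA (ℓ a b : ℕ) (hb : b < p ^ ℓ) :
    (((a * p ^ ℓ + b).choose (a * p ^ ℓ) : ℕ) : ZMod p) = 1 := by
  have hq : 0 < p ^ ℓ := pow_pos (Fact.out : p.Prime).pos ℓ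
  have h := (ZMod.intCast_eq_intCast_iff _ _ _).mpr
    (Choose.choose_modEq_choose_mul_prod_range_choose (p := p)
      (n := a * p ^ ℓ + b) (k := a * p ^ ℓ) ℓ)
  push_cast at h
  rw [h]
  have hn : (a * p ^ ℓ + b) / p ^ ℓ = a := by
    rw [mul_comm a, Nat.mul_add_div hq, Nat.div_eq_of_lt hb, add_zero]
  have hk : a * p ^ ℓ / p ^ ℓ = a := Nat.mul_div_cancel a hq
  rw [hn, hk, Nat.choose_self]
  have : ∀ x ∈ range ℓ, (((((a * p ^ ℓ + b) / p ^ x % p).choose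
      (a * p ^ ℓ / p ^ x % p)) : ℕ) : ZMod p) = 1 := by
    intro x hx
    rw [pow_div_pow_mod p a ℓ x (mem_range.mp hx), Nat.choose_zero_right, Nat.cast_one]
  rw [prod_congr rfl this]
  simp

/-- Lucas at level `p^ℓ`, part B: `p ∣ choose N r` when `p^ℓ ∣ N` and `0 < r < p^ℓ`. -/
private lemma lucasB (ℓ N r : ℕ) (hN : p ^ ℓ ∣ N) (hr0 : 0 < r) (hrℓ : r < p ^ ℓ) :
    ((N.choose r : ℕ) : ZMod p) = 0 := by
  have hp1 : 1 < p := (Fact.out : p.Prime).one_lt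
  have h := (ZMod.intCast_eq_intCast_iff _ _ _).mpr
    (Choose.choose_modEq_choose_mul_prod_range_choose (p := p) (n := N) (k := r) ℓ)
  push_cast at h
  rw [h]
  set i := Nat.log p r with hi
  have hile : p ^ i ≤ r := Nat.pow_log_le_self p hr0.ne'
  have hilt : r < p ^ (i + 1) := Nat.lt_pow_succ_log_self hp1 r
  have hiℓ : i < ℓ := by
    by_contra hc
    exact absurd (le_trans (Nat.pow_le_pow_right (le_of_lt hp1) (not_lt.mp hc)) hile)
      (not_le.mpr hrℓ)
  apply mul_eq_zero_of_right
  apply Finset.prod_eq_zero (mem_range.mpr hiℓ)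
  obtain ⟨c, rfl⟩ := hN
  rw [mul_comm (p ^ ℓ) c, pow_div_pow_mod p c ℓ i hiℓ]
  have hrdiv : 0 < r / p ^ i := Nat.div_pos hile (pow_pos (Fact.out : p.Prime).pos i)
  have hrlt : r / p ^ i < p := Nat.div_lt_of_lt_mul (by
    calc r < p ^ (i + 1) := hilt
    _ = p ^ i * p := pow_succ p i)
  rw [Nat.mod_eq_of_lt hrlt, Nat.choose_eq_zero_of_lt hrdiv, Nat.cast_zero]

end LucasHelpers

/-- Let `F` be a field of characteristic `p > 0` with an `m`-variate iterative
derivation `θ`, and `F_ℓ := ∩_{j ∈ J_ℓ} ker θ^{(j)}`. Then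
`θ(F_ℓ) ⊆ F_ℓ[[T_1^{p^ℓ},…,T_m^{p^ℓ}]]`: for `x ∈ F_ℓ` one has `θ^{(k)}(x) = 0` unless
all coordinates of `k` are divisible by `p^ℓ`, and `θ^{(k)}(x) ∈ F_ℓ` for all `k`. -/
theorem kernel_field_invariant
    (m p ℓ : ℕ) (hp : p.Prime) (F : Type) [Field F] [CharP F p]
    (θ : IterativeDerivation m F)
    (x : F) (hx : ∀ j ∈ Jset m p ℓ, θ.D j x = 0) :
    (∀ k : Fin m →₀ ℕ, ¬ (∀ i : Fin m, p ^ ℓ ∣ k i) → θ.D k x = 0) ∧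
    (∀ k : Fin m →₀ ℕ, ∀ j ∈ Jset m p ℓ, θ.D j (θ.D k x) = 0) := by
  haveI : Fact p.Prime := ⟨hp⟩
  have hq : 0 < p ^ ℓ := pow_pos hp.pos ℓ
  -- a natural number whose image in `ZMod p` is nonzero is nonzero in `F`
  have castF : ∀ n : ℕ, ((n : ZMod p) ≠ 0) → (n : F) ≠ 0 := by
    intro n hn hF
    exact hn ((ZMod.natCast_eq_zero_iff n p).mpr
      ((CharP.cast_eq_zero_iff F p n).mp hF))
  have part1 : ∀ k : Fin m →₀ ℕ, ¬ (∀ i : Fin m, p ^ ℓ ∣ k i) → θ.D k x = 0 := by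
    intro k hk
    push_neg at hk
    obtain ⟨i₀, hi₀⟩ := hk
    set j : Fin m →₀ ℕ := k.mapRange (· % p ^ ℓ) (Nat.zero_mod _) with hjdef
    have hjapp : ∀ μ, j μ = k μ % p ^ ℓ := fun μ => rfl
    have hjJ : j ∈ Jset m p ℓ := by
      constructor
      · intro h0
        apply hi₀
        have : j i₀ = 0 := by rw [h0]; rfl
        rw [hjapp i₀] at this
        exact Nat.dvd_iff_mod_eq_zero.mpr this
      · intro i; rw [hjapp i]; exact Nat.mod_lt _ hq
    set k' : Fin m →₀ ℕ := k - j with hk'def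
    have hk'app : ∀ μ, k' μ = k μ - k μ % p ^ ℓ := by
      intro μ; rw [hk'def, Finsupp.tsub_apply, hjapp μ]
    have hsum : k' + j = k := by
      ext μ
      rw [Finsupp.add_apply, hk'app μ, hjapp μ]
      exact Nat.sub_add_cancel (Nat.mod_le _ _)
    have hDj : MvPowerSeries.coeff j (θ.toRingHom x) = 0 := hx j hjJ
    have hiter := θ.iterate k' j x
    rw [hDj, map_zero, map_zero, hsum] at hiter
    -- the multinomial coefficient is ≡ 1 mod p
    have hmc : ((multiChoose k' j : ℕ) : ZMod p) = 1 := by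
      rw [multiChoose, Nat.cast_prod]
      apply Finset.prod_eq_one
      intro μ _
      have h1 : k' μ = (k μ / p ^ ℓ) * p ^ ℓ := by
        have := Nat.div_add_mod (k μ) (p ^ ℓ)
        rw [hk'app μ, mul_comm]
        omega
      rw [h1, hjapp μ]
      exact lucasA p ℓ _ _ (Nat.mod_lt _ hq)
    have hne : ((multiChoose k' j : ℕ) : F) ≠ 0 := castF _ (by rw [hmc]; exact one_ne_zero)
    have := hiter.symm
    rw [nsmul_eq_mul] at this
    rcases mul_eq_zero.mp this with h | h
    · exact absurd h hne
    · exact h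
  refine ⟨part1, ?_⟩
  intro k j hjJ
  show MvPowerSeries.coeff j (θ.toRingHom (MvPowerSeries.coeff k (θ.toRingHom x))) = 0
  rw [θ.iterate j k x]
  by_cases hdvd : p ∣ multiChoose j k
  · rw [nsmul_eq_mul, (CharP.cast_eq_zero_iff F p _).mpr hdvd, zero_mul]
  · have hnd : ¬ (∀ i : Fin m, p ^ ℓ ∣ (j + k) i) := by
      intro hall
      apply hdvd
      obtain ⟨μ, hμ⟩ : ∃ μ, j μ ≠ 0 := by
        by_contra hc
        push_neg at hc
        exact hjJ.1 (Finsupp.ext hc)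
      have hfac : ((((j μ + k μ).choose (j μ) : ℕ)) : ZMod p) = 0 := by
        apply lucasB p ℓ
        · have := hall μ; rwa [Finsupp.add_apply] at this
        · exact Nat.pos_of_ne_zero hμ
        · exact hjJ.2 μ
      have : p ∣ (j μ + k μ).choose (j μ) :=
        (ZMod.natCast_eq_zero_iff _ p).mp hfac
      exact dvd_trans this (Finset.dvd_prod_of_mem _ (Finset.mem_univ μ))
    have h0 : MvPowerSeries.coeff (j + k) (θ.toRingHom x) = 0 := part1 (j + k) hnd
    rw [h0, smul_zero]
end

section
/- Let F be a field of characteristic p > 0 with an m-variate iterative derivation θ, and for ℓ ∈ ℕ set J_ℓ := { j ∈ ℕ^m \ {0} : j_i < p^ℓ for all i } and F_ℓ := ∩_{j∈J_ℓ} ker(θ^{(j)}). Then for all ℓ_1, ℓ_2 ∈ ℕ: F_{ℓ_1+ℓ_2} = { y ∈ F_{ℓ_1} : θ^{(p^{ℓ_1}·a)}(y) = 0 for all a ∈ J_{ℓ_2} }, where p^{ℓ_1}·a denotes the multi-index obtained by multiplying each coordinate of a by p^{ℓ_1}. -/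
open scoped TensorProduct

/-- Key Lucas-type fact: if `b < p^ℓ` then `choose (b + p^ℓ * a) b ≡ 1 mod p`. -/
lemma choose_add_pow_mul_cast_eq_one (p : ℕ) (hp : p.Prime) :
    ∀ (ℓ b a : ℕ), b < p ^ ℓ → ((Nat.choose (b + p ^ ℓ * a) b : ZMod p) = 1)
  | 0, b, a, hb => by
      have hb0 : b = 0 := Nat.lt_one_iff.mp (by simpa using hb)
      subst hb0; simp
  | (ℓ + 1), b, a, hb => by
      haveI : Fact p.Prime := ⟨hp⟩
      have hmod := (Choose.choose_modEq_choose_mod_mul_choose_div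
        (p := p) (n := b + p ^ (ℓ + 1) * a) (k := b))
      have h1 : b + p ^ (ℓ + 1) * a = b + p * (p ^ ℓ * a) := by ring
      have hpos : 0 < p := hp.pos
      have hn_mod : (b + p ^ (ℓ + 1) * a) % p = b % p := by
        rw [h1, Nat.add_mul_mod_self_left]
      have hn_div : (b + p ^ (ℓ + 1) * a) / p = b / p + p ^ ℓ * a := by
        rw [h1, Nat.add_mul_div_left _ _ hpos]
      have hbd : b / p < p ^ ℓ := by
        apply Nat.div_lt_of_lt_mul
        calc b < p ^ (ℓ + 1) := hb
          _ = p * p ^ ℓ := by ring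
      have hcast : ((Nat.choose (b + p ^ (ℓ + 1) * a) b : ℤ) : ZMod p) =
          ((Nat.choose ((b + p ^ (ℓ + 1) * a) % p) (b % p) *
            Nat.choose ((b + p ^ (ℓ + 1) * a) / p) (b / p) : ℤ) : ZMod p) :=
        (ZMod.intCast_eq_intCast_iff _ _ _).mpr hmod
      push_cast at hcast
      rw [hcast, hn_mod, hn_div, Nat.choose_self,
        choose_add_pow_mul_cast_eq_one p hp ℓ (b / p) a hbd]
      simp

lemma multiChoose_smul_cast_eq_one (m p : ℕ) (hp : p.Prime) (ℓ : ℕ)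
    (b a : Fin m →₀ ℕ) (hb : ∀ μ, b μ < p ^ ℓ) :
    ((multiChoose b (p ^ ℓ • a) : ZMod p) = 1) := by
  unfold multiChoose
  rw [Nat.cast_prod]
  apply Finset.prod_eq_one
  intro μ _
  rw [Finsupp.smul_apply, smul_eq_mul]
  exact choose_add_pow_mul_cast_eq_one p hp ℓ (b μ) (a μ) (hb μ)

/-- Let `F` be a field of characteristic `p > 0` with an `m`-variate iterative
derivation `θ`, and `F_ℓ := ∩_{j ∈ J_ℓ} ker θ^{(j)}`. Then for all `ℓ₁, ℓ₂`:
`F_{ℓ₁+ℓ₂} = { y ∈ F_{ℓ₁} : θ^{(p^{ℓ₁}·a)}(y) = 0 for all a ∈ J_{ℓ₂} }`. -/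

theorem kernel_field_add
    (m p : ℕ) (hp : p.Prime) (F : Type) [Field F] [CharP F p]
    (θ : IterativeDerivation m F) :
    ∀ ℓ₁ ℓ₂ : ℕ,
      {y : F | ∀ j ∈ Jset m p (ℓ₁ + ℓ₂), θ.D j y = 0} =
        {y : F | (∀ j ∈ Jset m p ℓ₁, θ.D j y = 0) ∧
          ∀ a ∈ Jset m p ℓ₂, θ.D (p ^ ℓ₁ • a) y = 0} := by
  
  haveI : Fact p.Prime := ⟨hp⟩
  intro ℓ₁ ℓ₂
  have hpos : 0 < p ^ ℓ₁ := Nat.pow_pos hp.pos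
  ext y
  simp only [Set.mem_setOf_eq]
  constructor
  · intro hy
    constructor
    · intro j hj
      refine hy j ⟨hj.1, fun i => lt_of_lt_of_le (hj.2 i) ?_⟩
      exact Nat.pow_le_pow_right hp.one_lt.le (Nat.le_add_right _ _)
    · intro a ha
      refine hy (p ^ ℓ₁ • a) ⟨?_, fun i => ?_⟩
      · intro h0
        apply ha.1
        ext μ
        have h1 : p ^ ℓ₁ * a μ = 0 := by
          have := DFunLike.congr_fun h0 μ
          simpa [Finsupp.smul_apply] using this
        simpa using (Nat.mul_eq_zero.mp h1).resolve_left hpos.ne' 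
      · have : (p ^ ℓ₁ • a) i = p ^ ℓ₁ * a i := by simp [Finsupp.smul_apply]
        rw [this, pow_add]
        exact mul_lt_mul_of_pos_left (ha.2 i) hpos
  · rintro ⟨hy1, hy2⟩ j hj
    set a : Fin m →₀ ℕ := Finsupp.equivFunOnFinite.symm (fun μ => j μ / p ^ ℓ₁) with ha_def
    set b : Fin m →₀ ℕ := Finsupp.equivFunOnFinite.symm (fun μ => j μ % p ^ ℓ₁) with hb_def
    have ha_app : ∀ μ, a μ = j μ / p ^ ℓ₁ := fun μ => rfl
    have hb_app : ∀ μ, b μ = j μ % p ^ ℓ₁ := fun μ => rfl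
    have hb_lt : ∀ μ, b μ < p ^ ℓ₁ := fun μ => Nat.mod_lt _ hpos
    have ha_lt : ∀ μ, a μ < p ^ ℓ₂ := by
      intro μ
      rw [ha_app]
      apply Nat.div_lt_of_lt_mul
      calc j μ < p ^ (ℓ₁ + ℓ₂) := hj.2 μ
        _ = p ^ ℓ₁ * p ^ ℓ₂ := pow_add p ℓ₁ ℓ₂
    have hdecomp : b + p ^ ℓ₁ • a = j := by
      ext μ
      simp only [Finsupp.add_apply, Finsupp.smul_apply, smul_eq_mul, hb_app, ha_app]
      exact Nat.mod_add_div _ _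
    by_cases haz : a = 0
    · -- then j ∈ J_{ℓ₁}
      refine hy1 j ⟨hj.1, fun μ => ?_⟩
      have : j μ = b μ := by
        rw [← hdecomp]; simp [haz]
      rw [this]; exact hb_lt μ
    · have haJ : a ∈ Jset m p ℓ₂ := ⟨haz, ha_lt⟩
      have hDa : θ.D (p ^ ℓ₁ • a) y = 0 := hy2 a haJ
      have hiter := θ.iterate b (p ^ ℓ₁ • a) y
      rw [show MvPowerSeries.coeff (p ^ ℓ₁ • a) (θ.toRingHom y) = θ.D (p ^ ℓ₁ • a) y from rfl,
        hDa, map_zero, map_zero] at hiter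
      have hcoef : ((multiChoose b (p ^ ℓ₁ • a) : F)) ≠ 0 := by
        rw [Ne, CharP.cast_eq_zero_iff F p]
        intro hdvd
        have h1 := multiChoose_smul_cast_eq_one m p hp ℓ₁ b a hb_lt
        rw [(ZMod.natCast_eq_zero_iff _ _).mpr hdvd] at h1
        exact zero_ne_one h1
      have := hiter.symm
      rw [nsmul_eq_mul, hdecomp] at this
      rcases mul_eq_zero.mp this with h | h
      · exact absurd h hcoef
      · exact h
end

section
/- Let F be a field of characteristic p > 0 with an m-variate iterative derivation θ, and for ℓ ∈ ℕ set J_ℓ := { j ∈ ℕ^m \ {0} : j_i < p^ℓ for all i } and F_ℓ := ∩_{j∈J_ℓ} ker(θ^{(j)}). If F_1 = F^p (the subfield of p-th powers), then F_ℓ = F^{p^ℓ} for all ℓ ∈ ℕ. -/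
open scoped TensorProduct

section Aux

variable {m p : ℕ} {F : Type} [Field F] [CharP F p]

lemma smul_finsupp_eq_zero_iff (hp : p ≠ 0) (j : Fin m →₀ ℕ) : p • j = 0 ↔ j = 0 := by
  constructor
  · intro h; ext i
    have := DFunLike.congr_fun h i
    simp only [Finsupp.smul_apply, smul_eq_mul, Finsupp.coe_zero, Pi.zero_apply] at this
    exact (Nat.mul_eq_zero.mp this).resolve_left hp
  · rintro rfl; simp

lemma smul_finsupp_injective (hp : p ≠ 0) {j k : Fin m →₀ ℕ} (h : p • j = p • k) : j = k := by
  ext i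
  have := DFunLike.congr_fun h i
  simp only [Finsupp.smul_apply, smul_eq_mul] at this
  exact Nat.eq_of_mul_eq_mul_left (Nat.pos_of_ne_zero hp) this

/-- Frobenius coefficient identity for multivariate polynomials: coefficient of
`f ^ p` at `p • k` is the `p`-th power of the coefficient of `f` at `k`. -/
lemma mvpoly_coeff_pow_smul (hp : p.Prime) (f : MvPolynomial (Fin m) F) (k : Fin m →₀ ℕ) :
    (f ^ p).coeff (p • k) = f.coeff k ^ p := by
  haveI : Fact p.Prime := ⟨hp⟩
  induction f using MvPolynomial.induction_on' with
  | monomial u a =>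
    rw [MvPolynomial.monomial_pow, MvPolynomial.coeff_monomial, MvPolynomial.coeff_monomial]
    by_cases h : u = k
    · subst h; simp
    · rw [if_neg (fun hh => h (smul_finsupp_injective hp.ne_zero hh)), if_neg h, zero_pow hp.ne_zero]
  | add f g hf hg =>
    rw [add_pow_char, MvPolynomial.coeff_add, hf, hg, MvPolynomial.coeff_add, add_pow_char]

/-- Frobenius vanishing: a coefficient of `f ^ p` at an index not divisible by `p` is zero. -/
lemma mvpoly_coeff_pow_not_smul (hp : p.Prime) (f : MvPolynomial (Fin m) F) (d : Fin m →₀ ℕ)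
    (hd : ¬ ∃ k, d = p • k) : (f ^ p).coeff d = 0 := by
  haveI : Fact p.Prime := ⟨hp⟩
  induction f using MvPolynomial.induction_on' with
  | monomial u a =>
    rw [MvPolynomial.monomial_pow, MvPolynomial.coeff_monomial, if_neg]
    intro hh; exact hd ⟨u, hh.symm⟩
  | add f g hf hg =>
    rw [add_pow_char, MvPolynomial.coeff_add, hf, hg, add_zero]

/-- Truncation: the coefficient of `f ^ p` at `d` agrees with that of `T ^ p`, where `T`
is the polynomial truncation of `f` at indices `≤ d`. -/
lemma coeff_pow_eq_trunc (hp : p.Prime) (f : MvPowerSeries (Fin m) F) (d : Fin m →₀ ℕ) :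
    MvPowerSeries.coeff d (f ^ p) =
      ((∑ a ∈ Finset.Iic d, MvPolynomial.monomial a (MvPowerSeries.coeff a f)) ^ p
        : MvPolynomial (Fin m) F).coeff d := by
  set T : MvPolynomial (Fin m) F :=
    ∑ a ∈ Finset.Iic d, MvPolynomial.monomial a (MvPowerSeries.coeff a f) with hT
  have hTc : ∀ a : Fin m →₀ ℕ, a ≤ d → MvPowerSeries.coeff a (↑T : MvPowerSeries (Fin m) F)
      = MvPowerSeries.coeff a f := by
    intro a ha
    rw [MvPolynomial.coeff_coe, hT, MvPolynomial.coeff_sum]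
    simp only [MvPolynomial.coeff_monomial]
    rw [Finset.sum_ite_eq' (Finset.Iic d) a]
    simp [Finset.mem_Iic.mpr ha]
  obtain ⟨C, hC⟩ := sub_dvd_pow_sub_pow f (↑T : MvPowerSeries (Fin m) F) p
  have hmul : MvPowerSeries.coeff d ((f - (↑T : MvPowerSeries (Fin m) F)) * C) = 0 := by
    rw [MvPowerSeries.coeff_mul]
    apply Finset.sum_eq_zero
    intro x hx
    have hxd : x.1 ≤ d := by
      rw [Finset.HasAntidiagonal.mem_antidiagonal] at hx
      intro i
      have := DFunLike.congr_fun hx i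
      simp only [Finsupp.add_apply] at this
      omega
    rw [map_sub, hTc x.1 hxd, sub_self, zero_mul]
  have := congrArg (MvPowerSeries.coeff d) hC
  rw [map_sub, hmul] at this
  have h2 : MvPowerSeries.coeff d (f ^ p) =
      MvPowerSeries.coeff d ((↑T : MvPowerSeries (Fin m) F) ^ p) := by
    linear_combination this
  rw [h2, ← MvPolynomial.coe_pow, MvPolynomial.coeff_coe]

lemma ps_coeff_pow_smul (hp : p.Prime) (f : MvPowerSeries (Fin m) F) (k : Fin m →₀ ℕ) :
    MvPowerSeries.coeff (p • k) (f ^ p) = (MvPowerSeries.coeff k f) ^ p := by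
  rw [coeff_pow_eq_trunc hp f (p • k), mvpoly_coeff_pow_smul hp]
  congr 1
  rw [MvPolynomial.coeff_sum]
  simp only [MvPolynomial.coeff_monomial]
  rw [Finset.sum_ite_eq' (Finset.Iic (p • k)) k]
  have hk : k ≤ p • k := by
    intro i
    simp only [Finsupp.smul_apply, smul_eq_mul]
    exact Nat.le_mul_of_pos_left _ hp.pos
  simp [Finset.mem_Iic.mpr hk]

lemma ps_coeff_pow_not_smul (hp : p.Prime) (f : MvPowerSeries (Fin m) F) (d : Fin m →₀ ℕ)
    (hd : ¬ ∃ k, d = p • k) : MvPowerSeries.coeff d (f ^ p) = 0 := by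
  rw [coeff_pow_eq_trunc hp f d]
  exact mvpoly_coeff_pow_not_smul hp _ d hd

/-- Coefficients of `f ^ (p ^ n)` vanish at nonzero indices all of whose components are `< p^n`. -/
lemma ps_coeff_pow_pow (hp : p.Prime) (f : MvPowerSeries (Fin m) F) :
    ∀ (n : ℕ) (j : Fin m →₀ ℕ), j ≠ 0 → (∀ i, j i < p ^ n) →
      MvPowerSeries.coeff j (f ^ p ^ n) = 0 := by
  intro n
  induction n with
  | zero =>
    intro j hj hlt
    exact absurd (Finsupp.ext fun i => Nat.lt_one_iff.mp (by simpa using hlt i)) hj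
  | succ n ih =>
    intro j hj hlt
    rw [pow_succ, pow_mul]
    by_cases hdvd : ∃ k, j = p • k
    · obtain ⟨k, rfl⟩ := hdvd
      rw [ps_coeff_pow_smul hp]
      have hk0 : k ≠ 0 := fun h => hj (by simp [h])
      have hklt : ∀ i, k i < p ^ n := by
        intro i
        have := hlt i
        simp only [Finsupp.smul_apply, smul_eq_mul, pow_succ'] at this ⊢
        exact Nat.lt_of_mul_lt_mul_left (a := p) this
      rw [ih k hk0 hklt, zero_pow hp.ne_zero]
    · exact ps_coeff_pow_not_smul hp _ j hdvd

end Aux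

/-- Let `F` be a field of characteristic `p > 0` with an `m`-variate iterative
derivation `θ`, and `F_ℓ := ∩_{j ∈ J_ℓ} ker θ^{(j)}`. If `F_1 = F^p`, then
`F_ℓ = F^{p^ℓ}` for all `ℓ`. -/
theorem kernel_field_eq_pow_of_first
    (m p : ℕ) (hp : p.Prime) (F : Type) [Field F] [CharP F p]
    (θ : IterativeDerivation m F)
    (h1 : {y : F | ∀ j ∈ Jset m p 1, θ.D j y = 0} = Set.range fun z : F => z ^ p) :
    ∀ ℓ : ℕ, {y : F | ∀ j ∈ Jset m p ℓ, θ.D j y = 0} =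
      Set.range fun z : F => z ^ p ^ ℓ := by
  intro ℓ
  induction ℓ with
  | zero =>
    ext y
    simp only [Set.mem_setOf_eq, Set.mem_range, pow_zero, pow_one]
    constructor
    · intro _; exact ⟨y, rfl⟩
    · rintro ⟨z, rfl⟩ j hj
      rcases hj with ⟨hj0, hjlt⟩
      exact absurd (Finsupp.ext fun i => Nat.lt_one_iff.mp (by simpa using hjlt i)) hj0
  | succ ℓ ih =>
    ext y
    simp only [Set.mem_setOf_eq, Set.mem_range]
    constructor
    · intro h
      -- y ∈ F_1 since J_1 ⊆ J_{ℓ+1}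
      have hy1 : y ∈ {y : F | ∀ j ∈ Jset m p 1, θ.D j y = 0} := by
        intro j hj
        rcases hj with ⟨hj0, hjlt⟩
        refine h j ⟨hj0, fun i => lt_of_lt_of_le (hjlt i) ?_⟩
        exact Nat.pow_le_pow_right hp.pos (by omega)
      rw [h1] at hy1
      obtain ⟨z, hz⟩ := hy1
      have hz' : z ^ p = y := hz
      -- z ∈ F_ℓ
      have hzF : z ∈ {y : F | ∀ j ∈ Jset m p ℓ, θ.D j y = 0} := by
        intro j hj
        rcases hj with ⟨hj0, hjlt⟩
        have hpj : (p • j) ∈ Jset m p (ℓ + 1) := by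
          refine ⟨fun hh => hj0 ((smul_finsupp_eq_zero_iff hp.ne_zero j).mp hh), fun i => ?_⟩
          simp only [Finsupp.smul_apply, smul_eq_mul, pow_succ']
          exact mul_lt_mul_of_pos_left (hjlt i) hp.pos
        have hkey : (θ.D j z) ^ p = 0 := by
          have := ps_coeff_pow_smul (F := F) hp (θ.toRingHom z) j
          rw [← map_pow, hz'] at this
          show MvPowerSeries.coeff j (θ.toRingHom z) ^ p = 0
          rw [← this]
          exact h (p • j) hpj
        exact pow_eq_zero_iff hp.ne_zero |>.mp hkey
      rw [ih] at hzF
      obtain ⟨w, hw⟩ := hzF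
      have hw' : w ^ p ^ ℓ = z := hw
      exact ⟨w, by show w ^ p ^ (ℓ + 1) = y; rw [pow_succ, pow_mul, hw', hz']⟩
    · rintro ⟨z, rfl⟩ j hj
      rcases hj with ⟨hj0, hjlt⟩
      show MvPowerSeries.coeff j (θ.toRingHom (z ^ p ^ (ℓ + 1))) = 0
      rw [map_pow]
      exact ps_coeff_pow_pow hp (θ.toRingHom z) (ℓ + 1) j hj0 hjlt
end

section
/- Let (F,θ) be an ID-field of characteristic p > 0 and (R,θ_R) an ID-ring extension of F which is an integral domain. Let ℓ ∈ ℕ, set J_ℓ := { j ∈ ℕ^m \ {0} : j_i < p^ℓ for all i } and F_ℓ := ∩_{j∈J_ℓ} ker(θ^{(j)}) ⊆ F. Suppose Ỹ ∈ GL_n(R) and Ã_k ∈ M_n(F) (k ∈ ℕ^m) satisfy θ_R^{(k)}(Ỹ) = Ã_k·Ỹ (entrywise) for all k ∈ ℕ^m, and θ_R^{(j)}(Ỹ) = 0 for all j ∈ J_ℓ. Then for every k ∈ ℕ^m: (a) Ã_k = 0 unless every coordinate of k is divisible by p^ℓ, and (b) all entries of Ã_k lie in F_ℓ. (That is, Ã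 := Σ_k Ã_k T^k lies in GL_n(F_ℓ[[T_1^{p^ℓ},…,T_m^{p^ℓ}]]).) -/
open scoped TensorProduct

section AuxLemmas

/-- Lucas corollary: `choose n (n % p^ℓ) ≡ 1 [MOD p]`. -/
lemma lucas_choose_mod_pow {p : ℕ} (hp : p.Prime) (ℓ : ℕ) (n : ℕ) :
    Nat.choose n (n % p ^ ℓ) ≡ 1 [MOD p] := by
  haveI : Fact p.Prime := ⟨hp⟩
  induction ℓ generalizing n with
  | zero => simp [Nat.mod_one, Nat.ModEq.refl]
  | succ ℓ ih =>
    calc Nat.choose n (n % p ^ (ℓ + 1))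
        ≡ Nat.choose (n % p) (n % p ^ (ℓ + 1) % p) *
            Nat.choose (n / p) (n % p ^ (ℓ + 1) / p) [MOD p] :=
          Choose.choose_modEq_choose_mod_mul_choose_div_nat
      _ = Nat.choose (n / p) ((n / p) % p ^ ℓ) := by
          rw [Nat.mod_mod_of_dvd _ (dvd_pow_self p (Nat.succ_ne_zero ℓ)), Nat.choose_self,
            one_mul, pow_succ', Nat.mod_mul_right_div_self]
      _ ≡ 1 [MOD p] := ih (n / p)

namespace IterativeDerivation

variable {m : ℕ} {R : Type*} [CommRing R] (θ : IterativeDerivation m R)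

lemma D_zero_right (k : Fin m →₀ ℕ) : θ.D k 0 = 0 := by simp [D]

lemma D_zero_left (r : R) : θ.D 0 r = r := θ.coeff_zero r

lemma D_mul (k : Fin m →₀ ℕ) (x y : R) :
    θ.D k (x * y) = ∑ ij ∈ Finset.HasAntidiagonal.antidiagonal k, θ.D ij.1 x * θ.D ij.2 y := by
  simp [D, map_mul, MvPowerSeries.coeff_mul]

lemma D_sum {ι : Type*} (k : Fin m →₀ ℕ) (s : Finset ι) (f : ι → R) :
    θ.D k (∑ c ∈ s, f c) = ∑ c ∈ s, θ.D k (f c) := by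
  simp [D, map_sum]

lemma D_iterate (i j : Fin m →₀ ℕ) (r : R) :
    θ.D i (θ.D j r) = multiChoose i j • θ.D (i + j) r := θ.iterate i j r

end IterativeDerivation

end AuxLemmas

/-- Let `(R, θR)` be an ID-domain extension of the ID-field `(F, θ)` of characteristic
`p > 0`. Suppose `Ỹ ∈ GL_n(R)` and matrices `Ã_k` over `F` satisfy
`θR^{(k)}(Ỹ) = Ã_k·Ỹ` for all `k` and `θR^{(j)}(Ỹ) = 0` for all `j ∈ J_ℓ`. Then
`Ã_k = 0` unless all coordinates of `k` are divisible by `p^ℓ`, and all entries of the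
`Ã_k` lie in `F_ℓ`; i.e. `Ã ∈ GL_n(F_ℓ[[T_1^{p^ℓ},…,T_m^{p^ℓ}]])`. -/
theorem twisted_IDE_coeffs_in_kernel_field
    (m n p ℓ : ℕ) (hp : p.Prime)
    (F R : Type) [Field F] [CharP F p] [CommRing R] [IsDomain R] [Algebra F R]
    (θF : IterativeDerivation m F) (θR : IterativeDerivation m R)
    (hext : θF.Extends θR)
    (Ytil : Matrix (Fin n) (Fin n) R) (hY : IsUnit Ytil.det)
    (Atil : (Fin m →₀ ℕ) → Matrix (Fin n) (Fin n) F)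
    (hfund : ∀ k : Fin m →₀ ℕ,
      Ytil.map (θR.D k) = (Atil k).map (algebraMap F R) * Ytil)
    (hJ : ∀ j ∈ Jset m p ℓ, Ytil.map (θR.D j) = 0) :
    (∀ k : Fin m →₀ ℕ, ¬ (∀ i : Fin m, p ^ ℓ ∣ k i) → Atil k = 0) ∧
    (∀ (k : Fin m →₀ ℕ) (a b : Fin n), ∀ j ∈ Jset m p ℓ, θF.D j (Atil k a b) = 0) := by
  have hinj : Function.Injective (algebraMap F R) := (algebraMap F R).injective
  haveI : CharP R p := charP_of_injective_algebraMap hinj p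
  have hppos : 0 < p ^ ℓ := pow_pos hp.pos ℓ
  have hYu : IsUnit Ytil := (Matrix.isUnit_iff_isUnit_det Ytil).mpr hY
  -- Step 1: θR^{(k)}(Ỹ) = 0 whenever some coordinate of k is not divisible by p^ℓ.
  have hzero : ∀ k : Fin m →₀ ℕ, ¬(∀ i : Fin m, p ^ ℓ ∣ k i) →
      Ytil.map (θR.D k) = 0 := by
    intro k hk
    set j : Fin m →₀ ℕ := Finsupp.mapRange (· % p ^ ℓ) (Nat.zero_mod _) k with hjdef
    have hjapp : ∀ ν, j ν = k ν % p ^ ℓ := fun ν => Finsupp.mapRange_apply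
    have hjJ : j ∈ Jset m p ℓ := by
      refine ⟨?_, fun ν => by rw [hjapp]; exact Nat.mod_lt _ hppos⟩
      push_neg at hk
      obtain ⟨ν, hν⟩ := hk
      intro h0
      apply hν
      apply Nat.dvd_of_mod_eq_zero
      rw [← hjapp, h0]
      rfl
    have hsum : (k - j) + j = k := by
      ext ν
      simp only [Finsupp.add_apply, Finsupp.tsub_apply, hjapp ν]
      exact Nat.sub_add_cancel (Nat.mod_le _ _)
    have hcast : ((multiChoose (k - j) j : ℕ) : R) = 1 := by
      have hmod : multiChoose (k - j) j ≡ 1 [MOD p] := by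
        rw [← ZMod.natCast_eq_natCast_iff]
        unfold multiChoose
        push_cast
        refine Finset.prod_eq_one fun ν _ => ?_
        simp only [Finsupp.coe_tsub, Pi.sub_apply, hjapp ν]
        rw [Nat.sub_add_cancel (Nat.mod_le _ _), Nat.choose_symm (Nat.mod_le _ _)]
        haveI : Fact p.Prime := ⟨hp⟩
        exact_mod_cast (ZMod.natCast_eq_natCast_iff _ _ _).mpr
          (lucas_choose_mod_pow hp ℓ (k ν))
      simpa using CharP.natCast_eq_natCast' R p hmod
    ext a b
    have hDj : θR.D j (Ytil a b) = 0 := by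
      have := congrFun (congrFun (hJ j hjJ) a) b
      simpa [Matrix.map_apply] using this
    have hit := θR.D_iterate (k - j) j (Ytil a b)
    rw [hDj, θR.D_zero_right, hsum] at hit
    have : θR.D k (Ytil a b) = 0 := by
      have := hit.symm
      rwa [nsmul_eq_mul, hcast, one_mul] at this
    simpa [Matrix.map_apply] using this
  -- Step 2 (part (a)): A_k = 0 unless all coordinates divisible by p^ℓ.
  have hA : ∀ k : Fin m →₀ ℕ, ¬(∀ i : Fin m, p ^ ℓ ∣ k i) → Atil k = 0 := by
    intro k hk
    have h := hfund k
    rw [hzero k hk] at h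
    have hM : (Atil k).map (algebraMap F R) = 0 :=
      hYu.mul_right_cancel (by rw [← h, zero_mul])
    ext a b
    apply hinj
    have := congrFun (congrFun hM a) b
    simpa [Matrix.map_apply] using this
  refine ⟨hA, ?_⟩
  -- Step 3 (part (b)): entries of A_k lie in F_ℓ.
  intro k a b j hjJ
  obtain ⟨hjne, hjlt⟩ := hjJ
  by_cases hdvd : ∀ i : Fin m, p ^ ℓ ∣ k i
  · -- key matrix identity: (θF^{(j)} A_k) · Ỹ = 0
    have key : ∀ a b : Fin n,
        ∑ c, algebraMap F R (θF.D j (Atil k a c)) * Ytil c b = 0 := by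
      intro a b
      have hrow : θR.D k (Ytil a b) = ∑ c, algebraMap F R (Atil k a c) * Ytil c b := by
        have := congrFun (congrFun (hfund k) a) b
        simpa [Matrix.map_apply, Matrix.mul_apply] using this
      have hnd : ¬ ∀ i : Fin m, p ^ ℓ ∣ (j + k) i := by
        obtain ⟨ν, hν⟩ := Finsupp.ne_iff.mp hjne
        simp only [Finsupp.coe_zero, Pi.zero_apply] at hν
        intro hall
        have h1 : p ^ ℓ ∣ j ν := by
          have h2 := hall ν
          rw [Finsupp.add_apply] at h2
          simpa using Nat.dvd_sub h2 (hdvd ν)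
        exact absurd (hjlt ν) (not_lt.mpr (Nat.le_of_dvd (Nat.pos_of_ne_zero hν) h1))
      have hlhs : θR.D j (θR.D k (Ytil a b)) = 0 := by
        rw [θR.D_iterate j k (Ytil a b)]
        have hz : θR.D (j + k) (Ytil a b) = 0 := by
          have := congrFun (congrFun (hzero (j + k) hnd) a) b
          simpa [Matrix.map_apply] using this
        rw [hz, smul_zero]
      have hrhs : θR.D j (θR.D k (Ytil a b)) =
          ∑ c, algebraMap F R (θF.D j (Atil k a c)) * Ytil c b := by
        rw [hrow, θR.D_sum]
        refine Finset.sum_congr rfl fun c _ => ?_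
        rw [θR.D_mul]
        rw [Finset.sum_eq_single ((j, 0) : (Fin m →₀ ℕ) × (Fin m →₀ ℕ))]
        · rw [hext j (Atil k a c), θR.D_zero_left]
        · intro ij hij hne
          have hij' : ij.1 + ij.2 = j := Finset.HasAntidiagonal.mem_antidiagonal.mp hij
          have h2ne : ij.2 ≠ 0 := by
            intro h0
            apply hne
            have h1 : ij.1 = j := by simpa [h0] using hij'
            exact Prod.ext h1 h0
          have h2J : ij.2 ∈ Jset m p ℓ := by
            refine ⟨h2ne, fun ν => lt_of_le_of_lt ?_ (hjlt ν)⟩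
            rw [← hij', Finsupp.add_apply]
            exact Nat.le_add_left _ _
          have : θR.D ij.2 (Ytil c b) = 0 := by
            have := congrFun (congrFun (hJ ij.2 h2J) c) b
            simpa [Matrix.map_apply] using this
          rw [this, mul_zero]
        · intro h
          exact absurd (Finset.HasAntidiagonal.mem_antidiagonal.mpr (add_zero j)) h
      rw [hrhs] at hlhs
      exact hlhs
    have hMmul : (Atil k).map (fun f => algebraMap F R (θF.D j f)) * Ytil = 0 := by
      ext a' b'
      simpa [Matrix.mul_apply, Matrix.map_apply] using key a' b'
    have hM0 : (Atil k).map (fun f => algebraMap F R (θF.D j f)) = 0 :=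
      hYu.mul_right_cancel (by rw [hMmul, zero_mul])
    apply hinj
    have := congrFun (congrFun hM0 a) b
    simpa [Matrix.map_apply] using this
  · rw [hA k hdvd]
    simp [IterativeDerivation.D]
end
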